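/- arXiv:1502.02623 — 5 statements merged into one kernel-verified Lean document; each statement's English description precedes it below -/
import Mathlib

section
/- Every finite projective plane Π = (P, 𝓛) of order n ≥ 2 is magic over the group (ℤ/nℤ)³: there exists an injective line-invariant function v : P → (ℤ/nℤ)³. -/
open Configuration

/-- The sum of `v` over the points of the line `l`. -/
noncomputable def lineSum {P L G : Type*} [Membership P L] [AddCommMonoid G]
    (v : P → G) (l : L) : G :=
  ∑ᶠ x ∈ {x : P | x ∈ l}, v x

/-- `v : P → G` is line invariant if its sum along every line of `L` is the same. -/
def LineInvariant (P L : Type*) {G : Type*} [Membership P L] [AddCommMonoid G]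
    (v : P → G) : Prop :=
  ∀ l l' : L, lineSum v l = lineSum v l'

open Configuration Configuration.ProjectivePlane Finset

set_option linter.unusedSectionVars false
attribute [local instance] Classical.propDecidable

namespace MagicPlane

/-- the sum of all elements of `ZMod n` -/
noncomputable def Sn (n : ℕ) [NeZero n] : ZMod n := ∑ t : ZMod n, t

section Geometry

variable {P L : Type*} [Membership P L] [Fintype P] [Fintype L] [ProjectivePlane P L]

lemma uniq_line {p q : P} {l l' : L} (hpq : p ≠ q) (h1 : p ∈ l) (h2 : q ∈ l)
    (h3 : p ∈ l') (h4 : q ∈ l') : l = l' :=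
  (Nondegenerate.eq_or_eq h1 h2 h3 h4).resolve_left hpq

lemma uniq_pt {p q : P} {l l' : L} (hll : l ≠ l') (h1 : p ∈ l) (h2 : p ∈ l')
    (h3 : q ∈ l) (h4 : q ∈ l') : p = q :=
  (Nondegenerate.eq_or_eq h1 h3 h2 h4).resolve_right hll

/-- All the choices for the construction. -/
structure Frame (P L : Type*) [Membership P L] [Fintype P] [Fintype L]
    [ProjectivePlane P L] (n : ℕ) where
  Linf : L
  p1 : P
  p2 : P
  o : P
  mem1 : p1 ∈ Linf
  mem2 : p2 ∈ Linf
  ne12 : p1 ≠ p2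
  ho : o ∉ Linf
  E1 : {l : L // p1 ∈ l ∧ l ≠ Linf} ≃ ZMod n
  E2 : {l : L // p2 ∈ l ∧ l ≠ Linf} ≃ ZMod n
  EA : {r : P // r ∈ Linf ∧ r ≠ p2} ≃ ZMod n
  horder : order P L = n
  hn2 : 2 ≤ n

namespace Frame

variable {n : ℕ} (F : Frame P L n)

/-- the line through `x` and `p1` -/
noncomputable def bl (x : P) : L := if h : x ≠ F.p1 then HasLines.mkLine h else F.Linf

/-- the line through `x` and `p2` -/
noncomputable def cl (x : P) : L := if h : x ≠ F.p2 then HasLines.mkLine h else F.Linf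

/-- the line through `x` and `o` -/
noncomputable def dl (x : P) : L := if h : x ≠ F.o then HasLines.mkLine h else F.Linf

lemma ne_p1 {x : P} (hx : x ∉ F.Linf) : x ≠ F.p1 := fun h => hx (h ▸ F.mem1)
lemma ne_p2 {x : P} (hx : x ∉ F.Linf) : x ≠ F.p2 := fun h => hx (h ▸ F.mem2)
lemma o_ne_p1 : F.o ≠ F.p1 := F.ne_p1 F.ho
lemma o_ne_p2 : F.o ≠ F.p2 := F.ne_p2 F.ho

lemma bl_mem {x : P} (h : x ≠ F.p1) : x ∈ F.bl x ∧ F.p1 ∈ F.bl x := by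
  rw [bl, dif_pos h]; exact HasLines.mkLine_ax h

lemma cl_mem {x : P} (h : x ≠ F.p2) : x ∈ F.cl x ∧ F.p2 ∈ F.cl x := by
  rw [cl, dif_pos h]; exact HasLines.mkLine_ax h

lemma dl_mem {x : P} (h : x ≠ F.o) : x ∈ F.dl x ∧ F.o ∈ F.dl x := by
  rw [dl, dif_pos h]; exact HasLines.mkLine_ax h

lemma bl_unique {x : P} {m : L} (h : x ≠ F.p1) (hx : x ∈ m) (hp : F.p1 ∈ m) :
    F.bl x = m := uniq_line h (F.bl_mem h).1 (F.bl_mem h).2 hx hp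

lemma cl_unique {x : P} {m : L} (h : x ≠ F.p2) (hx : x ∈ m) (hp : F.p2 ∈ m) :
    F.cl x = m := uniq_line h (F.cl_mem h).1 (F.cl_mem h).2 hx hp

lemma dl_unique {x : P} {m : L} (h : x ≠ F.o) (hx : x ∈ m) (hp : F.o ∈ m) :
    F.dl x = m := uniq_line h (F.dl_mem h).1 (F.dl_mem h).2 hx hp

/-- the line through `o` and `p1` -/
noncomputable def B0 : L := F.bl F.o
/-- the line through `o` and `p2` -/
noncomputable def C0 : L := F.cl F.o

lemma o_mem_B0 : F.o ∈ F.B0 := (F.bl_mem F.o_ne_p1).1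
lemma p1_mem_B0 : F.p1 ∈ F.B0 := (F.bl_mem F.o_ne_p1).2
lemma o_mem_C0 : F.o ∈ F.C0 := (F.cl_mem F.o_ne_p2).1
lemma p2_mem_C0 : F.p2 ∈ F.C0 := (F.cl_mem F.o_ne_p2).2

lemma B0_ne_Linf : F.B0 ≠ F.Linf := fun h => F.ho (h ▸ F.o_mem_B0)
lemma C0_ne_Linf : F.C0 ≠ F.Linf := fun h => F.ho (h ▸ F.o_mem_C0)

lemma p2_notMem_B0 : F.p2 ∉ F.B0 := fun h =>
  F.B0_ne_Linf (uniq_line F.ne12 F.p1_mem_B0 h F.mem1 F.mem2)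
lemma p1_notMem_C0 : F.p1 ∉ F.C0 := fun h =>
  F.C0_ne_Linf (uniq_line F.ne12 h F.p2_mem_C0 F.mem1 F.mem2)

lemma B0_ne_C0 : F.B0 ≠ F.C0 := fun h => F.p1_notMem_C0 (h ▸ F.p1_mem_B0)

lemma eq_o_of_mem_B0_C0 {x : P} (h1 : x ∈ F.B0) (h2 : x ∈ F.C0) : x = F.o :=
  uniq_pt F.B0_ne_C0 h1 h2 F.o_mem_B0 F.o_mem_C0

lemma pencil1 {x : P} (hx : x ∉ F.Linf) : F.p1 ∈ F.bl x ∧ F.bl x ≠ F.Linf :=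
  ⟨(F.bl_mem (F.ne_p1 hx)).2, fun h => hx (h ▸ (F.bl_mem (F.ne_p1 hx)).1)⟩

lemma pencil2 {x : P} (hx : x ∉ F.Linf) : F.p2 ∈ F.cl x ∧ F.cl x ≠ F.Linf :=
  ⟨(F.cl_mem (F.ne_p2 hx)).2, fun h => hx (h ▸ (F.cl_mem (F.ne_p2 hx)).1)⟩

lemma B0_pencil : F.p1 ∈ F.B0 ∧ F.B0 ≠ F.Linf := ⟨F.p1_mem_B0, F.B0_ne_Linf⟩
lemma C0_pencil : F.p2 ∈ F.C0 ∧ F.C0 ≠ F.Linf := ⟨F.p2_mem_C0, F.C0_ne_Linf⟩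

/-- base label of the pencil at `p1` -/
noncomputable def e0 : ZMod n := F.E1 ⟨F.B0, F.B0_pencil⟩
noncomputable def f0 : ZMod n := F.E2 ⟨F.C0, F.C0_pencil⟩

/-- the pencil line at `p1` with label `β` -/
noncomputable def lineB (β : ZMod n) : L := (F.E1.symm (β + F.e0)).1
noncomputable def lineC (γ : ZMod n) : L := (F.E2.symm (γ + F.f0)).1

lemma lineB_pencil (β : ZMod n) : F.p1 ∈ F.lineB β ∧ F.lineB β ≠ F.Linf :=
  (F.E1.symm (β + F.e0)).2

lemma lineC_pencil (γ : ZMod n) : F.p2 ∈ F.lineC γ ∧ F.lineC γ ≠ F.Linf :=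
  (F.E2.symm (γ + F.f0)).2

lemma lineB_zero : F.lineB 0 = F.B0 := by
  have : (⟨F.B0, F.B0_pencil⟩ : {l : L // F.p1 ∈ l ∧ l ≠ F.Linf}) = F.E1.symm (0 + F.e0) := by
    rw [zero_add, e0, Equiv.symm_apply_apply]
  rw [lineB, ← this]

lemma lineC_zero : F.lineC 0 = F.C0 := by
  have : (⟨F.C0, F.C0_pencil⟩ : {l : L // F.p2 ∈ l ∧ l ≠ F.Linf}) = F.E2.symm (0 + F.f0) := by
    rw [zero_add, f0, Equiv.symm_apply_apply]
  rw [lineC, ← this]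

/-- the `b`-coordinate -/
noncomputable def b (x : P) : ZMod n :=
  if h : F.p1 ∈ F.bl x ∧ F.bl x ≠ F.Linf then F.E1 ⟨F.bl x, h⟩ - F.e0 else 0

noncomputable def c (x : P) : ZMod n :=
  if h : F.p2 ∈ F.cl x ∧ F.cl x ≠ F.Linf then F.E2 ⟨F.cl x, h⟩ - F.f0 else 0

lemma b_def {x : P} (hx : x ∉ F.Linf) : F.b x = F.E1 ⟨F.bl x, F.pencil1 hx⟩ - F.e0 := by
  rw [b, dif_pos (F.pencil1 hx)]

lemma c_def {x : P} (hx : x ∉ F.Linf) : F.c x = F.E2 ⟨F.cl x, F.pencil2 hx⟩ - F.f0 := by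
  rw [c, dif_pos (F.pencil2 hx)]

lemma lineB_b {x : P} (hx : x ∉ F.Linf) : F.lineB (F.b x) = F.bl x := by
  rw [b_def F hx, lineB, sub_add_cancel, Equiv.symm_apply_apply]

lemma lineC_c {x : P} (hx : x ∉ F.Linf) : F.lineC (F.c x) = F.cl x := by
  rw [c_def F hx, lineC, sub_add_cancel, Equiv.symm_apply_apply]

lemma b_inj {x y : P} (hx : x ∉ F.Linf) (hy : y ∉ F.Linf) (h : F.b x = F.b y) :
    F.bl x = F.bl y := by
  rw [← F.lineB_b hx, ← F.lineB_b hy, h]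

lemma c_inj {x y : P} (hx : x ∉ F.Linf) (hy : y ∉ F.Linf) (h : F.c x = F.c y) :
    F.cl x = F.cl y := by
  rw [← F.lineC_c hx, ← F.lineC_c hy, h]

lemma b_lineB_pt {x : P} (hx : x ∉ F.Linf) {β : ZMod n} (hmem : x ∈ F.lineB β) :
    F.b x = β := by
  have hbl : F.bl x = F.lineB β :=
    F.bl_unique (F.ne_p1 hx) hmem (F.lineB_pencil β).1
  have : F.E1 ⟨F.bl x, F.pencil1 hx⟩ = β + F.e0 := by
    have : (⟨F.bl x, F.pencil1 hx⟩ : {l : L // F.p1 ∈ l ∧ l ≠ F.Linf})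
        = F.E1.symm (β + F.e0) := Subtype.ext hbl
    rw [this, Equiv.apply_symm_apply]
  rw [b_def F hx, this, add_sub_cancel_right]

lemma c_lineC_pt {x : P} (hx : x ∉ F.Linf) {γ : ZMod n} (hmem : x ∈ F.lineC γ) :
    F.c x = γ := by
  have hcl : F.cl x = F.lineC γ :=
    F.cl_unique (F.ne_p2 hx) hmem (F.lineC_pencil γ).1
  have : F.E2 ⟨F.cl x, F.pencil2 hx⟩ = γ + F.f0 := by
    have : (⟨F.cl x, F.pencil2 hx⟩ : {l : L // F.p2 ∈ l ∧ l ≠ F.Linf})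
        = F.E2.symm (γ + F.f0) := Subtype.ext hcl
    rw [this, Equiv.apply_symm_apply]
  rw [c_def F hx, this, add_sub_cancel_right]

lemma b_zero_iff {x : P} (hx : x ∉ F.Linf) : F.b x = 0 ↔ x ∈ F.B0 := by
  constructor
  · intro h
    have := F.lineB_b hx
    rw [h, lineB_zero] at this
    exact this ▸ (F.bl_mem (F.ne_p1 hx)).1
  · intro h
    exact F.b_lineB_pt hx (by rw [lineB_zero]; exact h)

lemma c_zero_iff {x : P} (hx : x ∉ F.Linf) : F.c x = 0 ↔ x ∈ F.C0 := by
  constructor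
  · intro h
    have := F.lineC_c hx
    rw [h, lineC_zero] at this
    exact this ▸ (F.cl_mem (F.ne_p2 hx)).1
  · intro h
    exact F.c_lineC_pt hx (by rw [lineC_zero]; exact h)

/-- the point at infinity of the line through `x` and `o` -/
noncomputable def dir (x : P) : P :=
  if h : F.dl x ≠ F.Linf then HasPoints.mkPoint h else F.p1

lemma dl_ne_Linf {x : P} (h : x ≠ F.o) : F.dl x ≠ F.Linf :=
  fun hh => F.ho (hh ▸ (F.dl_mem h).2)

lemma dir_mem {x : P} (h : x ≠ F.o) : F.dir x ∈ F.dl x ∧ F.dir x ∈ F.Linf := by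
  rw [dir, dif_pos (F.dl_ne_Linf h)]
  exact HasPoints.mkPoint_ax (F.dl_ne_Linf h)

lemma dir_unique {x s : P} (h : x ≠ F.o) (hs1 : s ∈ F.dl x) (hs2 : s ∈ F.Linf) :
    s = F.dir x :=
  uniq_pt (F.dl_ne_Linf h) hs1 hs2 (F.dir_mem h).1 (F.dir_mem h).2

lemma dir_B0 {x : P} (hx : x ∉ F.Linf) (hxo : x ≠ F.o) (hB : x ∈ F.B0) :
    F.dir x = F.p1 := by
  have hdl : F.dl x = F.B0 := F.dl_unique hxo hB F.o_mem_B0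
  exact (F.dir_unique hxo (hdl ▸ F.p1_mem_B0) F.mem1).symm

lemma dir_C0 {x : P} (hx : x ∉ F.Linf) (hxo : x ≠ F.o) (hC : x ∈ F.C0) :
    F.dir x = F.p2 := by
  have hdl : F.dl x = F.C0 := F.dl_unique hxo hC F.o_mem_C0
  exact (F.dir_unique hxo (hdl ▸ F.p2_mem_C0) F.mem2).symm

lemma mem_B0_of_dir_p1 {x : P} (hxo : x ≠ F.o) (h : F.dir x = F.p1) : x ∈ F.B0 := by
  have : F.dl x = F.B0 := by
    have h1 : F.p1 ∈ F.dl x := h ▸ (F.dir_mem hxo).1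
    exact uniq_line F.o_ne_p1.symm h1 (F.dl_mem hxo).2 F.p1_mem_B0 F.o_mem_B0
  exact this ▸ (F.dl_mem hxo).1

lemma mem_C0_of_dir_p2 {x : P} (hxo : x ≠ F.o) (h : F.dir x = F.p2) : x ∈ F.C0 := by
  have : F.dl x = F.C0 := by
    have h1 : F.p2 ∈ F.dl x := h ▸ (F.dir_mem hxo).1
    exact uniq_line F.o_ne_p2.symm h1 (F.dl_mem hxo).2 F.p2_mem_C0 F.o_mem_C0
  exact this ▸ (F.dl_mem hxo).1

/-- the labelling of the points of `Linf` -/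
noncomputable def alf : ZMod n := F.EA ⟨F.p1, ⟨F.mem1, F.ne12⟩⟩

noncomputable def a (r : P) : ZMod n :=
  if h : r ∈ F.Linf ∧ r ≠ F.p2 then F.EA ⟨r, h⟩ else F.alf

lemma a_p1 : F.a F.p1 = F.alf := by rw [a, dif_pos ⟨F.mem1, F.ne12⟩]; rfl

lemma a_p2 : F.a F.p2 = F.alf := by
  rw [a, dif_neg]; simp

lemma a_inj {r r' : P} (h1 : r ∈ F.Linf) (h2 : r ≠ F.p2) (h3 : r' ∈ F.Linf)
    (h4 : r' ≠ F.p2) (h : F.a r = F.a r') : r = r' := by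
  rw [a, dif_pos ⟨h1, h2⟩, a, dif_pos ⟨h3, h4⟩] at h
  exact congrArg Subtype.val (F.EA.injective h)

lemma a_ne_alf {r : P} (h1 : r ∈ F.Linf) (h2 : r ≠ F.p1) (h3 : r ≠ F.p2) :
    F.a r ≠ F.alf := fun h => h2 (F.a_inj h1 h3 F.mem1 F.ne12 (h.trans F.a_p1.symm))

/-- the points of a line, as a finset -/
noncomputable def pts (l : L) : Finset P := univ.filter (· ∈ l)

@[simp] lemma mem_pts {l : L} {x : P} : x ∈ pts (P := P) l ↔ x ∈ l := by
  simp [pts]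

/-- the affine points of a line -/
noncomputable def Faff (l : L) : Finset P :=
  univ.filter (fun x => x ∈ l ∧ x ∉ F.Linf)

@[simp] lemma mem_Faff {l : L} {x : P} : x ∈ F.Faff l ↔ x ∈ l ∧ x ∉ F.Linf := by
  simp [Faff]

include F in
lemma card_pts (l : L) : (pts (P := P) l).card = n + 1 := by
  have h := pointCount_eq P l
  rw [F.horder] at h
  rw [pointCount, Nat.card_eq_fintype_card, Fintype.card_subtype] at h
  exact h

/-- the point at infinity of a line -/
noncomputable def rpt (l : L) : P :=
  if h : l ≠ F.Linf then HasPoints.mkPoint h else F.p1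

lemma rpt_mem {l : L} (h : l ≠ F.Linf) : F.rpt l ∈ l ∧ F.rpt l ∈ F.Linf := by
  rw [rpt, dif_pos h]; exact HasPoints.mkPoint_ax h

lemma rpt_unique {l : L} (h : l ≠ F.Linf) {x : P} (h1 : x ∈ l) (h2 : x ∈ F.Linf) :
    x = F.rpt l := uniq_pt h h1 h2 (F.rpt_mem h).1 (F.rpt_mem h).2

lemma rpt_notMem_Faff {l : L} (h : l ≠ F.Linf) : F.rpt l ∉ F.Faff l := by
  simp only [mem_Faff]
  exact fun hh => hh.2 (F.rpt_mem h).2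

lemma pts_decomp {l : L} (h : l ≠ F.Linf) :
    pts (P := P) l = insert (F.rpt l) (F.Faff l) := by
  ext x
  simp only [mem_pts, Finset.mem_insert, mem_Faff]
  constructor
  · intro hx
    by_cases hL : x ∈ F.Linf
    · exact Or.inl (F.rpt_unique h hx hL)
    · exact Or.inr ⟨hx, hL⟩
  · rintro (rfl | ⟨hx, -⟩)
    · exact (F.rpt_mem h).1
    · exact hx

lemma card_Faff {l : L} (h : l ≠ F.Linf) : (F.Faff l).card = n := by
  have := F.card_pts l
  rw [F.pts_decomp h, Finset.card_insert_of_notMem (F.rpt_notMem_Faff h)] at this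
  omega

lemma sum_pts_decomp {l : L} (h : l ≠ F.Linf) (v : P → ZMod n) :
    ∑ x ∈ pts (P := P) l, v x = v (F.rpt l) + ∑ x ∈ F.Faff l, v x := by
  rw [F.pts_decomp h, Finset.sum_insert (F.rpt_notMem_Faff h)]

/-- intersection point of two lines -/
noncomputable def ipt (m l : L) : P :=
  if h : m ≠ l then HasPoints.mkPoint h else F.p1

lemma ipt_mem {m l : L} (h : m ≠ l) : F.ipt m l ∈ m ∧ F.ipt m l ∈ l := by
  rw [ipt, dif_pos h]; exact HasPoints.mkPoint_ax h

section Sums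

variable [NeZero n]

lemma natCast_pred : ((n - 1 : ℕ) : ZMod n) = -1 := by
  have h1 : 1 ≤ n := Nat.one_le_iff_ne_zero.mpr (NeZero.ne n)
  push_cast [Nat.cast_sub h1]
  simp [ZMod.natCast_self]

/-- Sum of the `b`-coordinate over the affine points of a line not through `p1`. -/
lemma sum_b {l : L} (hp : F.p1 ∉ l) : ∑ x ∈ F.Faff l, F.b x = Sn n := by
  have hlL : l ≠ F.Linf := fun h => hp (h ▸ F.mem1)
  have hBne : ∀ β : ZMod n, F.lineB β ≠ l :=
    fun β h => hp (h ▸ (F.lineB_pencil β).1)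
  have hjmem : ∀ β : ZMod n, F.ipt (F.lineB β) l ∈ F.Faff l := by
    intro β
    have hm := F.ipt_mem (hBne β)
    simp only [mem_Faff]
    refine ⟨hm.2, fun hL => ?_⟩
    have : F.ipt (F.lineB β) l = F.p1 :=
      uniq_pt (F.lineB_pencil β).2 hm.1 hL (F.lineB_pencil β).1 F.mem1
    exact hp (this ▸ hm.2)
  rw [Sn]
  refine Finset.sum_nbij' (i := fun x => F.b x) (j := fun β => F.ipt (F.lineB β) l)
    ?_ ?_ ?_ ?_ ?_
  · intro x _; exact Finset.mem_univ _
  · intro β _; exact hjmem β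
  · intro x hx
    simp only [mem_Faff] at hx
    have hblx : F.lineB (F.b x) = F.bl x := F.lineB_b hx.2
    have hne : F.bl x ≠ l := fun h => hp (h ▸ (F.bl_mem (F.ne_p1 hx.2)).2)
    have hne' : F.lineB (F.b x) ≠ l := by rw [hblx]; exact hne
    have hm := F.ipt_mem hne'
    refine uniq_pt hne' hm.1 hm.2 ?_ hx.1
    rw [hblx]
    exact (F.bl_mem (F.ne_p1 hx.2)).1
  · intro β _
    have hm := F.ipt_mem (hBne β)
    have hx := hjmem β
    simp only [mem_Faff] at hx
    exact F.b_lineB_pt hx.2 hm.1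
  · intro x _; rfl

/-- Sum of the `b`-coordinate over the affine points of a line through `p1`. -/
lemma sum_b_pencil {l : L} (hp : F.p1 ∈ l) (hlL : l ≠ F.Linf) :
    ∑ x ∈ F.Faff l, F.b x = 0 := by
  have hconst : ∀ x ∈ F.Faff l, F.b x = F.E1 ⟨l, hp, hlL⟩ - F.e0 := by
    intro x hx
    simp only [mem_Faff] at hx
    have : F.bl x = l := F.bl_unique (F.ne_p1 hx.2) hx.1 hp
    rw [F.b_def hx.2]
    congr 1
    exact congrArg F.E1 (Subtype.ext this)
  rw [Finset.sum_congr rfl hconst, Finset.sum_const, F.card_Faff hlL,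
    nsmul_eq_mul, ZMod.natCast_self, zero_mul]

/-- Sum of the indicator of `B0` over the affine points of a line not through `p1`. -/
lemma sum_chiB {l : L} (hp : F.p1 ∉ l) (k : ZMod n) :
    ∑ x ∈ F.Faff l, (if x ∈ F.B0 then k else 0) = k := by
  have hne : F.B0 ≠ l := fun h => hp (h ▸ F.p1_mem_B0)
  have hm := F.ipt_mem hne
  have hzmem : F.ipt F.B0 l ∈ F.Faff l := by
    simp only [mem_Faff]
    refine ⟨hm.2, fun hL => ?_⟩
    have : F.ipt F.B0 l = F.p1 :=
      uniq_pt F.B0_ne_Linf hm.1 hL F.p1_mem_B0 F.mem1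
    exact hp (this ▸ hm.2)
  rw [Finset.sum_eq_single_of_mem (F.ipt F.B0 l) hzmem]
  · rw [if_pos hm.1]
  · intro y hy hne'
    simp only [mem_Faff] at hy
    rw [if_neg]
    intro hyB
    exact hne' (uniq_pt hne hyB hy.1 hm.1 hm.2)

lemma sum_chiB_pencil {l : L} (hp : F.p1 ∈ l) (hlL : l ≠ F.Linf) (k : ZMod n) :
    ∑ x ∈ F.Faff l, (if x ∈ F.B0 then k else 0) = 0 := by
  by_cases hB : l = F.B0
  · subst hB
    have : ∀ x ∈ F.Faff F.B0, (if x ∈ F.B0 then k else 0) = k := by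
      intro x hx
      simp only [mem_Faff] at hx
      rw [if_pos hx.1]
    rw [Finset.sum_congr rfl this, Finset.sum_const, F.card_Faff hlL,
      nsmul_eq_mul, ZMod.natCast_self, zero_mul]
  · have : ∀ x ∈ F.Faff l, (if x ∈ F.B0 then k else 0) = 0 := by
      intro x hx
      simp only [mem_Faff] at hx
      rw [if_neg]
      intro hxB
      exact hB (uniq_line (F.ne_p1 hx.2) hx.1 hp hxB F.p1_mem_B0)
    rw [Finset.sum_congr rfl this, Finset.sum_const, smul_zero]

/-- Sum of the `c`-coordinate over the affine points of a line not through `p2`. -/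
lemma sum_c {l : L} (hp : F.p2 ∉ l) : ∑ x ∈ F.Faff l, F.c x = Sn n := by
  have hBne : ∀ γ : ZMod n, F.lineC γ ≠ l :=
    fun γ h => hp (h ▸ (F.lineC_pencil γ).1)
  have hjmem : ∀ γ : ZMod n, F.ipt (F.lineC γ) l ∈ F.Faff l := by
    intro γ
    have hm := F.ipt_mem (hBne γ)
    simp only [mem_Faff]
    refine ⟨hm.2, fun hL => ?_⟩
    have : F.ipt (F.lineC γ) l = F.p2 :=
      uniq_pt (F.lineC_pencil γ).2 hm.1 hL (F.lineC_pencil γ).1 F.mem2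
    exact hp (this ▸ hm.2)
  rw [Sn]
  refine Finset.sum_nbij' (i := fun x => F.c x) (j := fun γ => F.ipt (F.lineC γ) l)
    ?_ ?_ ?_ ?_ ?_
  · intro x _; exact Finset.mem_univ _
  · intro γ _; exact hjmem γ
  · intro x hx
    simp only [mem_Faff] at hx
    have hclx : F.lineC (F.c x) = F.cl x := F.lineC_c hx.2
    have hne : F.cl x ≠ l := fun h => hp (h ▸ (F.cl_mem (F.ne_p2 hx.2)).2)
    have hne' : F.lineC (F.c x) ≠ l := by rw [hclx]; exact hne
    have hm := F.ipt_mem hne'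
    refine uniq_pt hne' hm.1 hm.2 ?_ hx.1
    rw [hclx]
    exact (F.cl_mem (F.ne_p2 hx.2)).1
  · intro γ _
    have hm := F.ipt_mem (hBne γ)
    have hx := hjmem γ
    simp only [mem_Faff] at hx
    exact F.c_lineC_pt hx.2 hm.1
  · intro x _; rfl

lemma sum_c_pencil {l : L} (hp : F.p2 ∈ l) (hlL : l ≠ F.Linf) :
    ∑ x ∈ F.Faff l, F.c x = 0 := by
  have hconst : ∀ x ∈ F.Faff l, F.c x = F.E2 ⟨l, hp, hlL⟩ - F.f0 := by
    intro x hx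
    simp only [mem_Faff] at hx
    have : F.cl x = l := F.cl_unique (F.ne_p2 hx.2) hx.1 hp
    rw [F.c_def hx.2]
    congr 1
    exact congrArg F.E2 (Subtype.ext this)
  rw [Finset.sum_congr rfl hconst, Finset.sum_const, F.card_Faff hlL,
    nsmul_eq_mul, ZMod.natCast_self, zero_mul]

lemma sum_chiC {l : L} (hp : F.p2 ∉ l) (k : ZMod n) :
    ∑ x ∈ F.Faff l, (if x ∈ F.C0 then k else 0) = k := by
  have hne : F.C0 ≠ l := fun h => hp (h ▸ F.p2_mem_C0)
  have hm := F.ipt_mem hne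
  have hzmem : F.ipt F.C0 l ∈ F.Faff l := by
    simp only [mem_Faff]
    refine ⟨hm.2, fun hL => ?_⟩
    have : F.ipt F.C0 l = F.p2 :=
      uniq_pt F.C0_ne_Linf hm.1 hL F.p2_mem_C0 F.mem2
    exact hp (this ▸ hm.2)
  rw [Finset.sum_eq_single_of_mem (F.ipt F.C0 l) hzmem]
  · rw [if_pos hm.1]
  · intro y hy hne'
    simp only [mem_Faff] at hy
    rw [if_neg]
    intro hyC
    exact hne' (uniq_pt hne hyC hy.1 hm.1 hm.2)

lemma sum_chiC_pencil {l : L} (hp : F.p2 ∈ l) (hlL : l ≠ F.Linf) (k : ZMod n) :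
    ∑ x ∈ F.Faff l, (if x ∈ F.C0 then k else 0) = 0 := by
  by_cases hC : l = F.C0
  · subst hC
    have : ∀ x ∈ F.Faff F.C0, (if x ∈ F.C0 then k else 0) = k := by
      intro x hx
      simp only [mem_Faff] at hx
      rw [if_pos hx.1]
    rw [Finset.sum_congr rfl this, Finset.sum_const, F.card_Faff hlL,
      nsmul_eq_mul, ZMod.natCast_self, zero_mul]
  · have : ∀ x ∈ F.Faff l, (if x ∈ F.C0 then k else 0) = 0 := by
      intro x hx
      simp only [mem_Faff] at hx
      rw [if_neg]
      intro hxC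
      exact hC (uniq_line (F.ne_p2 hx.2) hx.1 hp hxC F.p2_mem_C0)
    rw [Finset.sum_congr rfl this, Finset.sum_const, smul_zero]

/-- total of the labels of the points at infinity -/
noncomputable def Ta : ZMod n := ∑ x ∈ pts (P := P) F.Linf, F.a x

/-- the tag of an affine point -/
noncomputable def tag (x : P) : ZMod n := if x = F.o then F.Ta else F.a (F.dir x)

lemma p2_mem_pts : F.p2 ∈ pts (P := P) F.Linf := mem_pts.mpr F.mem2

lemma Ta_eq : F.Ta = Sn n + F.alf := by
  rw [Ta, ← Finset.sum_erase_add _ _ F.p2_mem_pts, F.a_p2]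
  congr 1
  rw [Sn]
  refine Finset.sum_nbij' (i := fun r => F.a r) (j := fun t => (F.EA.symm t).1)
    ?_ ?_ ?_ ?_ ?_
  · intro r _; exact Finset.mem_univ _
  · intro t _
    simp only [Finset.mem_erase, mem_pts]
    exact ⟨(F.EA.symm t).2.2, (F.EA.symm t).2.1⟩
  · intro r hr
    simp only [Finset.mem_erase, mem_pts] at hr
    show (F.EA.symm (F.a r)).1 = r
    rw [a, dif_pos ⟨hr.2, hr.1⟩, Equiv.symm_apply_apply]
  · intro t _
    show F.a (F.EA.symm t).1 = t
    rw [a, dif_pos ⟨(F.EA.symm t).2.1, (F.EA.symm t).2.2⟩]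
    simp only [Subtype.coe_eta, Equiv.apply_symm_apply]
  · intro r _; rfl

/-- Sum of tags over the affine points of any line other than `Linf`. -/
lemma sum_tag {l : L} (hlL : l ≠ F.Linf) :
    ∑ x ∈ F.Faff l, F.tag x = F.Ta - F.a (F.rpt l) := by
  by_cases ho : F.o ∈ l
  · -- the line goes through o
    have homem : F.o ∈ F.Faff l := by simp only [mem_Faff]; exact ⟨ho, F.ho⟩
    rw [← Finset.add_sum_erase _ _ homem]
    have htago : F.tag F.o = F.Ta := by rw [tag, if_pos rfl]
    have hconst : ∀ x ∈ (F.Faff l).erase F.o, F.tag x = F.a (F.rpt l) := by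
      intro x hx
      simp only [Finset.mem_erase, mem_Faff] at hx
      have hdl : F.dl x = l := F.dl_unique hx.1 hx.2.1 ho
      have : F.rpt l = F.dir x :=
        F.dir_unique hx.1 (hdl ▸ (F.rpt_mem hlL).1) (F.rpt_mem hlL).2
      rw [tag, if_neg hx.1, ← this]
    rw [htago, Finset.sum_congr rfl hconst, Finset.sum_const]
    have hcard : ((F.Faff l).erase F.o).card = n - 1 := by
      rw [Finset.card_erase_of_mem homem, F.card_Faff hlL]
    rw [hcard, nsmul_eq_mul, natCast_pred (n := n)]
    ring
  · -- the line misses o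
    have key : ∑ x ∈ F.Faff l, F.tag x
        = ∑ r ∈ (pts (P := P) F.Linf).erase (F.rpt l), F.a r := by
      refine Finset.sum_nbij' (i := fun x => F.dir x)
        (j := fun s => F.ipt (F.dl s) l) ?_ ?_ ?_ ?_ ?_
      · intro x hx
        simp only [mem_Faff] at hx
        have hxo : x ≠ F.o := fun h => ho (h ▸ hx.1)
        simp only [Finset.mem_erase, mem_pts]
        refine ⟨?_, (F.dir_mem hxo).2⟩
        intro heq
        have h1 : F.dl x ≠ l := fun h => ho (h ▸ (F.dl_mem hxo).2)
        have : x = F.dir x := by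
          refine uniq_pt h1 ?_ hx.1 (F.dir_mem hxo).1 (heq ▸ (F.rpt_mem hlL).1)
          exact (F.dl_mem hxo).1
        exact hx.2 (this ▸ (F.dir_mem hxo).2)
      · intro s hs
        simp only [Finset.mem_erase, mem_pts] at hs
        have hso : s ≠ F.o := fun h => F.ho (h ▸ hs.2)
        have hdlne : F.dl s ≠ l := fun h => ho (h ▸ (F.dl_mem hso).2)
        have hm := F.ipt_mem hdlne
        simp only [mem_Faff]
        refine ⟨hm.2, fun hL => ?_⟩
        have : F.ipt (F.dl s) l = s :=
          uniq_pt (F.dl_ne_Linf hso) hm.1 hL (F.dl_mem hso).1 hs.2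
        exact hs.1 (this ▸ F.rpt_unique hlL hm.2 hL)
      · intro x hx
        simp only [mem_Faff] at hx
        have hxo : x ≠ F.o := fun h => ho (h ▸ hx.1)
        have hdo : F.dir x ≠ F.o := fun h => F.ho (h ▸ (F.dir_mem hxo).2)
        have hdd : F.dl (F.dir x) = F.dl x :=
          F.dl_unique hdo (F.dir_mem hxo).1 (F.dl_mem hxo).2
        have hdlne : F.dl (F.dir x) ≠ l := by
          rw [hdd]; exact fun h => ho (h ▸ (F.dl_mem hxo).2)
        have hm := F.ipt_mem hdlne
        refine uniq_pt hdlne hm.1 hm.2 ?_ hx.1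
        rw [hdd]
        exact (F.dl_mem hxo).1
      · intro s hs
        simp only [Finset.mem_erase, mem_pts] at hs
        have hso : s ≠ F.o := fun h => F.ho (h ▸ hs.2)
        have hdlne : F.dl s ≠ l := fun h => ho (h ▸ (F.dl_mem hso).2)
        have hm := F.ipt_mem hdlne
        set z := F.ipt (F.dl s) l with hz
        have hzmem : z ∈ F.Faff l := by
          simp only [mem_Faff]
          refine ⟨hm.2, fun hL => ?_⟩
          have : z = s := uniq_pt (F.dl_ne_Linf hso) hm.1 hL (F.dl_mem hso).1 hs.2
          exact hs.1 (this ▸ F.rpt_unique hlL hm.2 hL)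
        simp only [mem_Faff] at hzmem
        have hzo : z ≠ F.o := fun h => ho (h ▸ hm.2)
        have hdlz : F.dl z = F.dl s := F.dl_unique hzo hm.1 (F.dl_mem hso).2
        exact (F.dir_unique hzo (hdlz ▸ (F.dl_mem hso).1) hs.2).symm
      · intro x hx
        simp only [mem_Faff] at hx
        have hxo : x ≠ F.o := fun h => ho (h ▸ hx.1)
        rw [tag, if_neg hxo]
    rw [key, Finset.sum_erase_eq_sub (mem_pts.mpr (F.rpt_mem hlL).2), Ta]

/-- first coordinate of the labelling -/
noncomputable def w1 (cs : ZMod n) (x : P) : ZMod n :=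
  if x ∈ F.Linf then F.a x + cs else F.tag x

/-- second coordinate of the labelling -/
noncomputable def w2 (k2 l2 s2 : ZMod n) (x : P) : ZMod n :=
  if x ∈ F.Linf then
    (if x = F.p1 then s2 - l2 else if x = F.p2 then s2 - Sn n - k2
      else s2 - Sn n - k2 - l2)
  else F.b x + (if x ∈ F.B0 then k2 else 0) + (if x ∈ F.C0 then l2 else 0)

/-- third coordinate of the labelling -/
noncomputable def w3 (k3 l3 s3 : ZMod n) (x : P) : ZMod n :=
  if x ∈ F.Linf then
    (if x = F.p1 then s3 - Sn n - l3 else if x = F.p2 then s3 - k3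
      else s3 - Sn n - k3 - l3)
  else F.c x + (if x ∈ F.B0 then k3 else 0) + (if x ∈ F.C0 then l3 else 0)

lemma p2_notMem {l : L} (hp : F.p1 ∈ l) (hl : l ≠ F.Linf) : F.p2 ∉ l :=
  fun hp2 => hl (uniq_line F.ne12 hp hp2 F.mem1 F.mem2)

lemma p1_notMem {l : L} (hp : F.p2 ∈ l) (hl : l ≠ F.Linf) : F.p1 ∉ l :=
  fun hp1 => hl (uniq_line F.ne12 hp1 hp F.mem1 F.mem2)

lemma cast_card_inf : ((n + 1 : ℕ) : ZMod n) = 1 := by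
  push_cast
  simp [ZMod.natCast_self]

lemma sum_w1 (cs : ZMod n) (l : L) :
    ∑ x ∈ pts (P := P) l, F.w1 cs x = F.Ta + cs := by
  by_cases hl : l = F.Linf
  · subst hl
    have h : ∀ x ∈ pts (P := P) F.Linf, F.w1 cs x = F.a x + cs := by
      intro x hx
      rw [w1, if_pos (mem_pts.mp hx)]
    rw [Finset.sum_congr rfl h, Finset.sum_add_distrib, Finset.sum_const,
      F.card_pts, nsmul_eq_mul, cast_card_inf (n := n), one_mul, ← Ta]
  · rw [F.sum_pts_decomp hl]
    have h1 : F.w1 cs (F.rpt l) = F.a (F.rpt l) + cs := by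
      rw [w1, if_pos (F.rpt_mem hl).2]
    have h2 : ∀ x ∈ F.Faff l, F.w1 cs x = F.tag x := by
      intro x hx
      simp only [mem_Faff] at hx
      rw [w1, if_neg hx.2]
    rw [h1, Finset.sum_congr rfl h2, F.sum_tag hl]
    ring

lemma p1_mem_pts : F.p1 ∈ pts (P := P) F.Linf := mem_pts.mpr F.mem1

lemma sum_w2 (k2 l2 s2 : ZMod n) (l : L) :
    ∑ x ∈ pts (P := P) l, F.w2 k2 l2 s2 x = s2 := by
  by_cases hl : l = F.Linf
  · subst hl
    have h : ∀ x ∈ pts (P := P) F.Linf, F.w2 k2 l2 s2 x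
        = (s2 - Sn n - k2 - l2) + ((if x = F.p1 then Sn n + k2 else 0)
          + (if x = F.p2 then l2 else 0)) := by
      intro x hx
      rw [w2, if_pos (mem_pts.mp hx)]
      by_cases h1 : x = F.p1
      · subst h1
        rw [if_pos rfl, if_pos rfl, if_neg F.ne12]
        ring
      · by_cases h2 : x = F.p2
        · subst h2
          rw [if_neg h1, if_pos rfl, if_neg h1, if_pos rfl]
          ring
        · rw [if_neg h1, if_neg h2, if_neg h1, if_neg h2]
          ring
    rw [Finset.sum_congr rfl h, Finset.sum_add_distrib, Finset.sum_const,
      F.card_pts, nsmul_eq_mul, cast_card_inf (n := n), one_mul,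
      Finset.sum_add_distrib, Finset.sum_ite_eq' _ F.p1, Finset.sum_ite_eq' _ F.p2,
      if_pos F.p1_mem_pts, if_pos F.p2_mem_pts]
    ring
  · rw [F.sum_pts_decomp hl]
    have haff : ∀ x ∈ F.Faff l, F.w2 k2 l2 s2 x
        = F.b x + (if x ∈ F.B0 then k2 else 0) + (if x ∈ F.C0 then l2 else 0) := by
      intro x hx
      simp only [mem_Faff] at hx
      rw [w2, if_neg hx.2]
    rw [Finset.sum_congr rfl haff, Finset.sum_add_distrib, Finset.sum_add_distrib]
    have hrL : F.rpt l ∈ F.Linf := (F.rpt_mem hl).2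
    by_cases h1 : F.p1 ∈ l
    · have hr : F.rpt l = F.p1 := (F.rpt_unique hl h1 F.mem1).symm
      have h2 : F.p2 ∉ l := F.p2_notMem h1 hl
      rw [F.sum_b_pencil h1 hl, F.sum_chiB_pencil h1 hl, F.sum_chiC h2,
        w2, if_pos hrL, hr, if_pos rfl]
      ring
    · by_cases h2 : F.p2 ∈ l
      · have hr : F.rpt l = F.p2 := (F.rpt_unique hl h2 F.mem2).symm
        have hrne : F.rpt l ≠ F.p1 := by
          rw [hr]; exact (F.ne12).symm
        rw [F.sum_b h1, F.sum_chiB h1, F.sum_chiC_pencil h2 hl,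
          w2, if_pos hrL, if_neg hrne, hr, if_pos rfl]
        ring
      · have hrne1 : F.rpt l ≠ F.p1 := fun h => h1 (h ▸ (F.rpt_mem hl).1)
        have hrne2 : F.rpt l ≠ F.p2 := fun h => h2 (h ▸ (F.rpt_mem hl).1)
        rw [F.sum_b h1, F.sum_chiB h1, F.sum_chiC h2,
          w2, if_pos hrL, if_neg hrne1, if_neg hrne2]
        ring

lemma sum_w3 (k3 l3 s3 : ZMod n) (l : L) :
    ∑ x ∈ pts (P := P) l, F.w3 k3 l3 s3 x = s3 := by
  by_cases hl : l = F.Linf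
  · subst hl
    have h : ∀ x ∈ pts (P := P) F.Linf, F.w3 k3 l3 s3 x
        = (s3 - Sn n - k3 - l3) + ((if x = F.p1 then k3 else 0)
          + (if x = F.p2 then Sn n + l3 else 0)) := by
      intro x hx
      rw [w3, if_pos (mem_pts.mp hx)]
      by_cases h1 : x = F.p1
      · subst h1
        rw [if_pos rfl, if_pos rfl, if_neg F.ne12]
        ring
      · by_cases h2 : x = F.p2
        · subst h2
          rw [if_neg h1, if_pos rfl, if_neg h1, if_pos rfl]
          ring
        · rw [if_neg h1, if_neg h2, if_neg h1, if_neg h2]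
          ring
    rw [Finset.sum_congr rfl h, Finset.sum_add_distrib, Finset.sum_const,
      F.card_pts, nsmul_eq_mul, cast_card_inf (n := n), one_mul,
      Finset.sum_add_distrib, Finset.sum_ite_eq' _ F.p1, Finset.sum_ite_eq' _ F.p2,
      if_pos F.p1_mem_pts, if_pos F.p2_mem_pts]
    ring
  · rw [F.sum_pts_decomp hl]
    have haff : ∀ x ∈ F.Faff l, F.w3 k3 l3 s3 x
        = F.c x + (if x ∈ F.B0 then k3 else 0) + (if x ∈ F.C0 then l3 else 0) := by
      intro x hx
      simp only [mem_Faff] at hx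
      rw [w3, if_neg hx.2]
    rw [Finset.sum_congr rfl haff, Finset.sum_add_distrib, Finset.sum_add_distrib]
    have hrL : F.rpt l ∈ F.Linf := (F.rpt_mem hl).2
    by_cases h1 : F.p1 ∈ l
    · have hr : F.rpt l = F.p1 := (F.rpt_unique hl h1 F.mem1).symm
      have h2 : F.p2 ∉ l := F.p2_notMem h1 hl
      rw [F.sum_c h2, F.sum_chiB_pencil h1 hl, F.sum_chiC h2,
        w3, if_pos hrL, hr, if_pos rfl]
      ring
    · by_cases h2 : F.p2 ∈ l
      · have hr : F.rpt l = F.p2 := (F.rpt_unique hl h2 F.mem2).symm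
        have hrne : F.rpt l ≠ F.p1 := by
          rw [hr]; exact (F.ne12).symm
        rw [F.sum_c_pencil h2 hl, F.sum_chiB h1, F.sum_chiC_pencil h2 hl,
          w3, if_pos hrL, if_neg hrne, hr, if_pos rfl]
        ring
      · have hrne1 : F.rpt l ≠ F.p1 := fun h => h1 (h ▸ (F.rpt_mem hl).1)
        have hrne2 : F.rpt l ≠ F.p2 := fun h => h2 (h ▸ (F.rpt_mem hl).1)
        rw [F.sum_c h2, F.sum_chiB h1, F.sum_chiC h2,
          w3, if_pos hrL, if_neg hrne1, if_neg hrne2]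
        ring

/-- the full labelling -/
noncomputable def vv (k2 k3 l2 l3 s2 s3 cs : ZMod n) (x : P) : Fin 3 → ZMod n :=
  ![F.w1 cs x, F.w2 k2 l2 s2 x, F.w3 k3 l3 s3 x]

lemma lineSum_vv (k2 k3 l2 l3 s2 s3 cs : ZMod n) (l : L) :
    lineSum (F.vv k2 k3 l2 l3 s2 s3 cs) l = ![F.Ta + cs, s2, s3] := by
  have hset : {x : P | x ∈ l} = ↑(pts (P := P) l) := by
    ext x; simp [pts]
  rw [lineSum, hset, finsum_mem_coe_finset]
  funext i
  rw [Finset.sum_apply]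
  fin_cases i
  · simpa [vv] using F.sum_w1 cs l
  · simpa [vv] using F.sum_w2 k2 l2 s2 l
  · simpa [vv] using F.sum_w3 k3 l3 s3 l

lemma lineInvariant_vv (k2 k3 l2 l3 s2 s3 cs : ZMod n) :
    LineInvariant P L (F.vv k2 k3 l2 l3 s2 s3 cs) := by
  intro l l'
  rw [F.lineSum_vv, F.lineSum_vv]

section Values

variable (k2 k3 l2 l3 s2 s3 cs : ZMod n)

lemma w1_p1 : F.w1 cs F.p1 = F.alf + cs := by
  rw [w1, if_pos F.mem1, F.a_p1]

lemma w1_p2 : F.w1 cs F.p2 = F.alf + cs := by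
  rw [w1, if_pos F.mem2, F.a_p2]

lemma w1_inf {x : P} (hx : x ∈ F.Linf) : F.w1 cs x = F.a x + cs := by
  rw [w1, if_pos hx]

lemma w1_o : F.w1 cs F.o = Sn n + F.alf := by
  rw [w1, if_neg F.ho, tag, if_pos rfl, F.Ta_eq]

lemma w1_aff {x : P} (hx : x ∉ F.Linf) (hxo : x ≠ F.o) :
    F.w1 cs x = F.a (F.dir x) := by
  rw [w1, if_neg hx, tag, if_neg hxo]

lemma w1_B {x : P} (hx : x ∉ F.Linf) (hxo : x ≠ F.o) (hB : x ∈ F.B0) :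
    F.w1 cs x = F.alf := by
  rw [F.w1_aff cs hx hxo, F.dir_B0 hx hxo hB, F.a_p1]

lemma w1_C {x : P} (hx : x ∉ F.Linf) (hxo : x ≠ F.o) (hC : x ∈ F.C0) :
    F.w1 cs x = F.alf := by
  rw [F.w1_aff cs hx hxo, F.dir_C0 hx hxo hC, F.a_p2]

lemma dir_G {x : P} (hx : x ∉ F.Linf) (hxo : x ≠ F.o) (hB : x ∉ F.B0) (hC : x ∉ F.C0) :
    F.dir x ∈ F.Linf ∧ F.dir x ≠ F.p1 ∧ F.dir x ≠ F.p2 :=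
  ⟨(F.dir_mem hxo).2, fun h => hB (F.mem_B0_of_dir_p1 hxo h),
    fun h => hC (F.mem_C0_of_dir_p2 hxo h)⟩

lemma w1_G_ne {x : P} (hx : x ∉ F.Linf) (hxo : x ≠ F.o) (hB : x ∉ F.B0) (hC : x ∉ F.C0) :
    F.w1 cs x ≠ F.alf := by
  rw [F.w1_aff cs hx hxo]
  obtain ⟨h1, h2, h3⟩ := F.dir_G hx hxo hB hC
  exact F.a_ne_alf h1 h2 h3

lemma notMem_C0_of_B {x : P} (hxo : x ≠ F.o) (hB : x ∈ F.B0) : x ∉ F.C0 :=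
  fun hC => hxo (F.eq_o_of_mem_B0_C0 hB hC)

lemma notMem_B0_of_C {x : P} (hxo : x ≠ F.o) (hC : x ∈ F.C0) : x ∉ F.B0 :=
  fun hB => hxo (F.eq_o_of_mem_B0_C0 hB hC)

lemma b_o : F.b F.o = 0 := (F.b_zero_iff F.ho).mpr F.o_mem_B0
lemma c_o : F.c F.o = 0 := (F.c_zero_iff F.ho).mpr F.o_mem_C0

lemma w2_p1 : F.w2 k2 l2 s2 F.p1 = s2 - l2 := by
  rw [w2, if_pos F.mem1, if_pos rfl]

lemma w2_p2 : F.w2 k2 l2 s2 F.p2 = s2 - Sn n - k2 := by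
  rw [w2, if_pos F.mem2, if_neg (Ne.symm F.ne12), if_pos rfl]

lemma w2_r {x : P} (hx : x ∈ F.Linf) (h1 : x ≠ F.p1) (h2 : x ≠ F.p2) :
    F.w2 k2 l2 s2 x = s2 - Sn n - k2 - l2 := by
  rw [w2, if_pos hx, if_neg h1, if_neg h2]

lemma w2_o : F.w2 k2 l2 s2 F.o = k2 + l2 := by
  rw [w2, if_neg F.ho, if_pos F.o_mem_B0, if_pos F.o_mem_C0, F.b_o, zero_add]

lemma w2_B {x : P} (hx : x ∉ F.Linf) (hxo : x ≠ F.o) (hB : x ∈ F.B0) :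
    F.w2 k2 l2 s2 x = k2 := by
  rw [w2, if_neg hx, if_pos hB, if_neg (F.notMem_C0_of_B hxo hB),
    (F.b_zero_iff hx).mpr hB, zero_add, add_zero]

lemma w2_C {x : P} (hx : x ∉ F.Linf) (hxo : x ≠ F.o) (hC : x ∈ F.C0) :
    F.w2 k2 l2 s2 x = F.b x + l2 := by
  rw [w2, if_neg hx, if_neg (F.notMem_B0_of_C hxo hC), if_pos hC, add_zero]

lemma w2_G {x : P} (hx : x ∉ F.Linf) (hB : x ∉ F.B0) (hC : x ∉ F.C0) :
    F.w2 k2 l2 s2 x = F.b x := by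
  rw [w2, if_neg hx, if_neg hB, if_neg hC, add_zero, add_zero]

lemma w3_p1 : F.w3 k3 l3 s3 F.p1 = s3 - Sn n - l3 := by
  rw [w3, if_pos F.mem1, if_pos rfl]

lemma w3_p2 : F.w3 k3 l3 s3 F.p2 = s3 - k3 := by
  rw [w3, if_pos F.mem2, if_neg (Ne.symm F.ne12), if_pos rfl]

lemma w3_r {x : P} (hx : x ∈ F.Linf) (h1 : x ≠ F.p1) (h2 : x ≠ F.p2) :
    F.w3 k3 l3 s3 x = s3 - Sn n - k3 - l3 := by
  rw [w3, if_pos hx, if_neg h1, if_neg h2]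

lemma w3_o : F.w3 k3 l3 s3 F.o = k3 + l3 := by
  rw [w3, if_neg F.ho, if_pos F.o_mem_B0, if_pos F.o_mem_C0, F.c_o, zero_add]

lemma w3_B {x : P} (hx : x ∉ F.Linf) (hxo : x ≠ F.o) (hB : x ∈ F.B0) :
    F.w3 k3 l3 s3 x = F.c x + k3 := by
  rw [w3, if_neg hx, if_pos hB, if_neg (F.notMem_C0_of_B hxo hB), add_zero]

lemma w3_C {x : P} (hx : x ∉ F.Linf) (hxo : x ≠ F.o) (hC : x ∈ F.C0) :
    F.w3 k3 l3 s3 x = l3 := by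
  rw [w3, if_neg hx, if_neg (F.notMem_B0_of_C hxo hC), if_pos hC,
    (F.c_zero_iff hx).mpr hC, zero_add, zero_add]

lemma w3_G {x : P} (hx : x ∉ F.Linf) (hB : x ∉ F.B0) (hC : x ∉ F.C0) :
    F.w3 k3 l3 s3 x = F.c x := by
  rw [w3, if_neg hx, if_neg hB, if_neg hC, add_zero, add_zero]

lemma b_ne_zero_C {x : P} (hx : x ∉ F.Linf) (hxo : x ≠ F.o) (hC : x ∈ F.C0) :
    F.b x ≠ 0 :=
  fun h => (F.notMem_B0_of_C hxo hC) ((F.b_zero_iff hx).mp h)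

lemma c_ne_zero_B {x : P} (hx : x ∉ F.Linf) (hxo : x ≠ F.o) (hB : x ∈ F.B0) :
    F.c x ≠ 0 :=
  fun h => (F.notMem_C0_of_B hxo hB) ((F.c_zero_iff hx).mp h)

lemma b_ne_zero_G {x : P} (hx : x ∉ F.Linf) (hB : x ∉ F.B0) : F.b x ≠ 0 :=
  fun h => hB ((F.b_zero_iff hx).mp h)

lemma c_ne_zero_G {x : P} (hx : x ∉ F.Linf) (hC : x ∉ F.C0) : F.c x ≠ 0 :=
  fun h => hC ((F.c_zero_iff hx).mp h)

lemma bl_ne_cl {x : P} (hx : x ∉ F.Linf) : F.bl x ≠ F.cl x := by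
  intro h
  apply (F.pencil1 hx).2
  refine uniq_line F.ne12 (F.pencil1 hx).1 ?_ F.mem1 F.mem2
  rw [h]
  exact (F.pencil2 hx).1

lemma aff_ext {x y : P} (hx : x ∉ F.Linf) (hy : y ∉ F.Linf)
    (hb : F.bl x = F.bl y) (hc : F.cl x = F.cl y) : x = y := by
  refine uniq_pt (F.bl_ne_cl hx) (F.bl_mem (F.ne_p1 hx)).1 (F.cl_mem (F.ne_p2 hx)).1
    ?_ ?_
  · rw [hb]; exact (F.bl_mem (F.ne_p1 hy)).1
  · rw [hc]; exact (F.cl_mem (F.ne_p2 hy)).1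

lemma aff_ext_bc {x y : P} (hx : x ∉ F.Linf) (hy : y ∉ F.Linf)
    (hb : F.b x = F.b y) (hc : F.c x = F.c y) : x = y :=
  F.aff_ext hx hy (F.b_inj hx hy hb) (F.c_inj hx hy hc)

/-- classification of the points -/
lemma classify (z : P) :
    z = F.p1 ∨ z = F.p2 ∨ (z ∈ F.Linf ∧ z ≠ F.p1 ∧ z ≠ F.p2) ∨ z = F.o ∨
    (z ∉ F.Linf ∧ z ≠ F.o ∧ z ∈ F.B0) ∨ (z ∉ F.Linf ∧ z ≠ F.o ∧ z ∈ F.C0) ∨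
    (z ∉ F.Linf ∧ z ≠ F.o ∧ z ∉ F.B0 ∧ z ∉ F.C0) := by
  by_cases hz : z ∈ F.Linf
  · by_cases h1 : z = F.p1
    · exact Or.inl h1
    · by_cases h2 : z = F.p2
      · exact Or.inr (Or.inl h2)
      · exact Or.inr (Or.inr (Or.inl ⟨hz, h1, h2⟩))
  · by_cases ho : z = F.o
    · exact Or.inr (Or.inr (Or.inr (Or.inl ho)))
    · by_cases hB : z ∈ F.B0
      · exact Or.inr (Or.inr (Or.inr (Or.inr (Or.inl ⟨hz, ho, hB⟩))))
      · by_cases hC : z ∈ F.C0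
        · exact Or.inr (Or.inr (Or.inr (Or.inr (Or.inr (Or.inl ⟨hz, ho, hC⟩)))))
        · exact Or.inr (Or.inr (Or.inr (Or.inr (Or.inr (Or.inr ⟨hz, ho, hB, hC⟩)))))

end Values

section Injectivity

lemma w2_aff_zero {x : P} (hx : x ∉ F.Linf) (s2 : ZMod n) : F.w2 0 0 s2 x = F.b x := by
  rw [w2, if_neg hx, ite_self, ite_self, add_zero, add_zero]

lemma w3_aff_zero {x : P} (hx : x ∉ F.Linf) (s3 : ZMod n) : F.w3 0 0 s3 x = F.c x := by
  rw [w3, if_neg hx, ite_self, ite_self, add_zero, add_zero]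

include F in
lemma one_ne_zero' : (1 : ZMod n) ≠ 0 := by
  haveI : Fact (1 < n) := ⟨F.hn2⟩
  exact one_ne_zero

/-- Injectivity of the labelling in the case `Sn n ≠ 0`. -/
lemma inj_even (hS : Sn n ≠ 0) :
    Function.Injective (F.vv 0 0 0 0 (Sn n) (Sn n) (Sn n)) := by
  have mixed : ∀ x y : P, x ∈ F.Linf → y ∉ F.Linf →
      F.w1 (Sn n) x = F.w1 (Sn n) y → F.w2 0 0 (Sn n) x = F.w2 0 0 (Sn n) y →
      F.w3 0 0 (Sn n) x = F.w3 0 0 (Sn n) y → False := by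
    intro x y hx hy e1 e2 e3
    rw [F.w2_aff_zero hy] at e2
    rw [F.w3_aff_zero hy] at e3
    by_cases h1 : x = F.p1
    · subst h1
      rw [F.w3_p1] at e3
      have hcy : F.c y = 0 := by linear_combination -e3
      have hyC : y ∈ F.C0 := (F.c_zero_iff hy).mp hcy
      by_cases hyo : y = F.o
      · subst hyo
        rw [F.w2_p1, F.b_o] at e2
        exact hS (by linear_combination e2)
      · rw [F.w1_p1, F.w1_C _ hy hyo hyC] at e1
        exact hS (by linear_combination e1)
    · by_cases h2 : x = F.p2
      · subst h2
        rw [F.w2_p2] at e2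
        have hby : F.b y = 0 := by linear_combination -e2
        have hyB : y ∈ F.B0 := (F.b_zero_iff hy).mp hby
        by_cases hyo : y = F.o
        · subst hyo
          rw [F.w3_p2, F.c_o] at e3
          exact hS (by linear_combination e3)
        · rw [F.w1_p2, F.w1_B _ hy hyo hyB] at e1
          exact hS (by linear_combination e1)
      · rw [F.w2_r _ _ _ hx h1 h2] at e2
        rw [F.w3_r _ _ _ hx h1 h2] at e3
        have hby : F.b y = 0 := by linear_combination -e2
        have hcy : F.c y = 0 := by linear_combination -e3
        have hyB : y ∈ F.B0 := (F.b_zero_iff hy).mp hby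
        have hyC : y ∈ F.C0 := (F.c_zero_iff hy).mp hcy
        have hyo : y = F.o := F.eq_o_of_mem_B0_C0 hyB hyC
        subst hyo
        rw [F.w1_inf _ hx, F.w1_o] at e1
        have : F.a x = F.alf := by linear_combination e1
        exact h1 (F.a_inj hx h2 F.mem1 F.ne12 (this.trans F.a_p1.symm))
  intro x y h
  have e1 : F.w1 (Sn n) x = F.w1 (Sn n) y := congrFun h 0
  have e2 : F.w2 0 0 (Sn n) x = F.w2 0 0 (Sn n) y := congrFun h 1
  have e3 : F.w3 0 0 (Sn n) x = F.w3 0 0 (Sn n) y := congrFun h 2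
  by_cases hx : x ∈ F.Linf
  · by_cases hy : y ∈ F.Linf
    · by_cases hx1 : x = F.p1
      · by_cases hy1 : y = F.p1
        · rw [hx1, hy1]
        · exfalso
          by_cases hy2 : y = F.p2
          · subst hx1; subst hy2
            rw [F.w2_p1, F.w2_p2] at e2
            exact hS (by linear_combination e2)
          · subst hx1
            rw [F.w2_p1, F.w2_r _ _ _ hy hy1 hy2] at e2
            exact hS (by linear_combination e2)
      · by_cases hx2 : x = F.p2
        · by_cases hy2 : y = F.p2
          · rw [hx2, hy2]
          · exfalso
            by_cases hy1 : y = F.p1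
            · subst hx2; subst hy1
              rw [F.w2_p2, F.w2_p1] at e2
              exact hS (by linear_combination -e2)
            · subst hx2
              rw [F.w3_p2, F.w3_r _ _ _ hy hy1 hy2] at e3
              exact hS (by linear_combination e3)
        · by_cases hy1 : y = F.p1
          · exfalso
            subst hy1
            rw [F.w2_p1, F.w2_r _ _ _ hx hx1 hx2] at e2
            exact hS (by linear_combination -e2)
          · by_cases hy2 : y = F.p2
            · exfalso
              subst hy2
              rw [F.w3_p2, F.w3_r _ _ _ hx hx1 hx2] at e3
              exact hS (by linear_combination -e3)
            · rw [F.w1_inf _ hx, F.w1_inf _ hy] at e1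
              have : F.a x = F.a y := by linear_combination e1
              exact F.a_inj hx hx2 hy hy2 this
    · exact absurd h (fun _ => mixed x y hx hy e1 e2 e3)
  · by_cases hy : y ∈ F.Linf
    · exact absurd h (fun _ => mixed y x hy hx e1.symm e2.symm e3.symm)
    · rw [F.w2_aff_zero hx, F.w2_aff_zero hy] at e2
      rw [F.w3_aff_zero hx, F.w3_aff_zero hy] at e3
      exact F.aff_ext_bc hx hy e2 e3

lemma lineB_ne_lineC (be ga : ZMod n) : F.lineB be ≠ F.lineC ga := by
  intro h
  apply (F.lineB_pencil be).2
  refine uniq_line F.ne12 (F.lineB_pencil be).1 ?_ F.mem1 F.mem2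
  rw [h]
  exact (F.lineC_pencil ga).1

/-- the special point with coordinates `(1, -1)` -/
noncomputable def yy : P := F.ipt (F.lineB 1) (F.lineC (-1))

lemma yy_not_inf : F.yy ∉ F.Linf := by
  intro h
  have hm := F.ipt_mem (F.lineB_ne_lineC 1 (-1))
  have h1 : F.yy = F.p1 :=
    uniq_pt (F.lineB_pencil 1).2 hm.1 h (F.lineB_pencil 1).1 F.mem1
  have hm2 : F.p1 ∈ F.lineC (-1) := by rw [← h1]; exact hm.2
  exact (F.lineC_pencil (-1)).2
    (uniq_line F.ne12 hm2 (F.lineC_pencil (-1)).1 F.mem1 F.mem2)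

/-- Injectivity of the labelling in the case `Sn n = 0`. -/
lemma inj_odd (hS : Sn n = 0) (h2z : (2 : ZMod n) ≠ 0) (h4z : (4 : ZMod n) ≠ 0)
    (cs : ZMod n) (hcs : cs ≠ 0) (hcsy : F.a (F.dir F.yy) ≠ F.alf + cs) :
    Function.Injective (F.vv 1 1 1 2 2 1 cs) := by
  have affO : ∀ x y : P, x ∉ F.Linf → y ∉ F.Linf →
      F.w1 cs x = F.w1 cs y → F.w2 1 1 2 x = F.w2 1 1 2 y →
      F.w3 1 2 1 x = F.w3 1 2 1 y → x = y := by
    intro x y hx hy e1 e2 e3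
    by_cases hxo : x = F.o
    · by_cases hyo : y = F.o
      · rw [hxo, hyo]
      · exfalso
        subst hxo
        by_cases hyB : y ∈ F.B0
        · rw [F.w2_o, F.w2_B _ _ _ hy hyo hyB] at e2
          exact F.one_ne_zero' (by linear_combination e2)
        · by_cases hyC : y ∈ F.C0
          · rw [F.w3_o, F.w3_C _ _ _ hy hyo hyC] at e3
            exact F.one_ne_zero' (by linear_combination e3)
          · rw [F.w1_o, F.w1_aff _ hy hyo] at e1
            obtain ⟨hd1, hd2, hd3⟩ := F.dir_G hy hyo hyB hyC
            exact F.a_ne_alf hd1 hd2 hd3 (by linear_combination -e1 + hS)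
    · by_cases hyo : y = F.o
      · exfalso
        subst hyo
        by_cases hxB : x ∈ F.B0
        · rw [F.w2_o, F.w2_B _ _ _ hx hxo hxB] at e2
          exact F.one_ne_zero' (by linear_combination -e2)
        · by_cases hxC : x ∈ F.C0
          · rw [F.w3_o, F.w3_C _ _ _ hx hxo hxC] at e3
            exact F.one_ne_zero' (by linear_combination -e3)
          · rw [F.w1_o, F.w1_aff _ hx hxo] at e1
            obtain ⟨hd1, hd2, hd3⟩ := F.dir_G hx hxo hxB hxC
            exact F.a_ne_alf hd1 hd2 hd3 (by linear_combination e1 + hS)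
      · by_cases hxB : x ∈ F.B0
        · by_cases hyB : y ∈ F.B0
          · rw [F.w3_B _ _ _ hx hxo hxB, F.w3_B _ _ _ hy hyo hyB] at e3
            refine F.aff_ext_bc hx hy ?_ (by linear_combination e3)
            rw [(F.b_zero_iff hx).mpr hxB, (F.b_zero_iff hy).mpr hyB]
          · by_cases hyC : y ∈ F.C0
            · exfalso
              rw [F.w2_B _ _ _ hx hxo hxB, F.w2_C _ _ _ hy hyo hyC] at e2
              exact F.b_ne_zero_C hy hyo hyC (by linear_combination -e2)
            · exfalso
              rw [F.w1_B _ hx hxo hxB, F.w1_aff _ hy hyo] at e1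
              obtain ⟨hd1, hd2, hd3⟩ := F.dir_G hy hyo hyB hyC
              exact F.a_ne_alf hd1 hd2 hd3 e1.symm
        · by_cases hxC : x ∈ F.C0
          · by_cases hyB : y ∈ F.B0
            · exfalso
              rw [F.w2_C _ _ _ hx hxo hxC, F.w2_B _ _ _ hy hyo hyB] at e2
              exact F.b_ne_zero_C hx hxo hxC (by linear_combination e2)
            · by_cases hyC : y ∈ F.C0
              · rw [F.w2_C _ _ _ hx hxo hxC, F.w2_C _ _ _ hy hyo hyC] at e2
                refine F.aff_ext_bc hx hy (by linear_combination e2) ?_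
                rw [(F.c_zero_iff hx).mpr hxC, (F.c_zero_iff hy).mpr hyC]
              · exfalso
                rw [F.w1_C _ hx hxo hxC, F.w1_aff _ hy hyo] at e1
                obtain ⟨hd1, hd2, hd3⟩ := F.dir_G hy hyo hyB hyC
                exact F.a_ne_alf hd1 hd2 hd3 e1.symm
          · by_cases hyB : y ∈ F.B0
            · exfalso
              rw [F.w1_B _ hy hyo hyB, F.w1_aff _ hx hxo] at e1
              obtain ⟨hd1, hd2, hd3⟩ := F.dir_G hx hxo hxB hxC
              exact F.a_ne_alf hd1 hd2 hd3 e1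
            · by_cases hyC : y ∈ F.C0
              · exfalso
                rw [F.w1_C _ hy hyo hyC, F.w1_aff _ hx hxo] at e1
                obtain ⟨hd1, hd2, hd3⟩ := F.dir_G hx hxo hxB hxC
                exact F.a_ne_alf hd1 hd2 hd3 e1
              · rw [F.w2_G _ _ _ hx hxB hxC, F.w2_G _ _ _ hy hyB hyC] at e2
                rw [F.w3_G _ _ _ hx hxB hxC, F.w3_G _ _ _ hy hyB hyC] at e3
                exact F.aff_ext_bc hx hy e2 e3
  have mixedO : ∀ x y : P, x ∈ F.Linf → y ∉ F.Linf →
      F.w1 cs x = F.w1 cs y → F.w2 1 1 2 x = F.w2 1 1 2 y →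
      F.w3 1 2 1 x = F.w3 1 2 1 y → False := by
    intro x y hx hy e1 e2 e3
    by_cases hyo : y = F.o
    · subst hyo
      by_cases h1 : x = F.p1
      · subst h1
        rw [F.w2_p1, F.w2_o] at e2
        exact F.one_ne_zero' (by linear_combination -e2)
      · by_cases h2 : x = F.p2
        · subst h2
          rw [F.w1_p2, F.w1_o] at e1
          exact hcs (by linear_combination e1 + hS)
        · rw [F.w2_r _ _ _ hx h1 h2, F.w2_o] at e2
          exact h2z (by linear_combination -e2 - hS)
    · by_cases hyB : y ∈ F.B0
      · by_cases h1 : x = F.p1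
        · subst h1
          rw [F.w1_p1, F.w1_B _ hy hyo hyB] at e1
          exact hcs (by linear_combination e1)
        · by_cases h2 : x = F.p2
          · subst h2
            rw [F.w1_p2, F.w1_B _ hy hyo hyB] at e1
            exact hcs (by linear_combination e1)
          · rw [F.w2_r _ _ _ hx h1 h2, F.w2_B _ _ _ hy hyo hyB] at e2
            exact F.one_ne_zero' (by linear_combination -e2 - hS)
      · by_cases hyC : y ∈ F.C0
        · by_cases h1 : x = F.p1
          · subst h1
            rw [F.w1_p1, F.w1_C _ hy hyo hyC] at e1
            exact hcs (by linear_combination e1)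
          · by_cases h2 : x = F.p2
            · subst h2
              rw [F.w1_p2, F.w1_C _ hy hyo hyC] at e1
              exact hcs (by linear_combination e1)
            · rw [F.w3_r _ _ _ hx h1 h2, F.w3_C _ _ _ hy hyo hyC] at e3
              exact h4z (by linear_combination -e3 - hS)
        · by_cases h1 : x = F.p1
          · subst h1
            rw [F.w2_p1, F.w2_G _ _ _ hy hyB hyC] at e2
            rw [F.w3_p1, F.w3_G _ _ _ hy hyB hyC] at e3
            have hby : F.b y = 1 := by linear_combination -e2
            have hcy : F.c y = -1 := by linear_combination -e3 - hS
            have hbly : F.bl y = F.lineB 1 := by rw [← F.lineB_b hy, hby]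
            have hcly : F.cl y = F.lineC (-1) := by rw [← F.lineC_c hy, hcy]
            have hyyy : y = F.yy := by
              have hm := F.ipt_mem (F.lineB_ne_lineC 1 (-1))
              refine uniq_pt (F.lineB_ne_lineC 1 (-1)) ?_ ?_ hm.1 hm.2
              · rw [← hbly]; exact (F.bl_mem (F.ne_p1 hy)).1
              · rw [← hcly]; exact (F.cl_mem (F.ne_p2 hy)).1
            rw [F.w1_p1, F.w1_aff _ hy hyo, hyyy] at e1
            exact hcsy e1.symm
          · by_cases h2 : x = F.p2
            · subst h2
              rw [F.w3_p2, F.w3_G _ _ _ hy hyB hyC] at e3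
              exact F.c_ne_zero_G hy hyC (by linear_combination -e3)
            · rw [F.w2_r _ _ _ hx h1 h2, F.w2_G _ _ _ hy hyB hyC] at e2
              exact F.b_ne_zero_G hy hyB (by linear_combination -e2 - hS)
  intro x y h
  have e1 : F.w1 cs x = F.w1 cs y := congrFun h 0
  have e2 : F.w2 1 1 2 x = F.w2 1 1 2 y := congrFun h 1
  have e3 : F.w3 1 2 1 x = F.w3 1 2 1 y := congrFun h 2
  by_cases hx : x ∈ F.Linf
  · by_cases hy : y ∈ F.Linf
    · by_cases hx1 : x = F.p1
      · by_cases hy1 : y = F.p1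
        · rw [hx1, hy1]
        · exfalso
          by_cases hy2 : y = F.p2
          · subst hx1; subst hy2
            rw [F.w3_p1, F.w3_p2] at e3
            exact F.one_ne_zero' (by linear_combination -e3 - hS)
          · subst hx1
            rw [F.w2_p1, F.w2_r _ _ _ hy hy1 hy2] at e2
            exact F.one_ne_zero' (by linear_combination e2 - hS)
      · by_cases hx2 : x = F.p2
        · by_cases hy2 : y = F.p2
          · rw [hx2, hy2]
          · exfalso
            by_cases hy1 : y = F.p1
            · subst hx2; subst hy1
              rw [F.w3_p2, F.w3_p1] at e3
              exact F.one_ne_zero' (by linear_combination e3 - hS)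
            · subst hx2
              rw [F.w2_p2, F.w2_r _ _ _ hy hy1 hy2] at e2
              exact F.one_ne_zero' (by linear_combination e2)
        · by_cases hy1 : y = F.p1
          · exfalso
            subst hy1
            rw [F.w2_p1, F.w2_r _ _ _ hx hx1 hx2] at e2
            exact F.one_ne_zero' (by linear_combination -e2 - hS)
          · by_cases hy2 : y = F.p2
            · exfalso
              subst hy2
              rw [F.w2_p2, F.w2_r _ _ _ hx hx1 hx2] at e2
              exact F.one_ne_zero' (by linear_combination -e2)
            · rw [F.w1_inf _ hx, F.w1_inf _ hy] at e1
              have : F.a x = F.a y := by linear_combination e1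
              exact F.a_inj hx hx2 hy hy2 this
    · exact absurd h (fun _ => mixedO x y hx hy e1 e2 e3)
  · by_cases hy : y ∈ F.Linf
    · exact absurd h (fun _ => mixedO y x hy hx e1.symm e2.symm e3.symm)
    · exact affO x y hx hy e1 e2 e3

end Injectivity

end Sums

end Frame

end Geometry

section Parity

lemma Sn_add_self (n : ℕ) [NeZero n] : Sn n + Sn n = 0 := by
  have hneg : ∑ t : ZMod n, -t = Sn n := by
    rw [Sn]
    exact Equiv.sum_comp (Equiv.neg (ZMod n)) (id : ZMod n → ZMod n)
  have hneg2 : ∑ t : ZMod n, -t = -Sn n := by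
    rw [Sn, ← Finset.sum_neg_distrib]
  have h := hneg.symm.trans hneg2
  linear_combination h

lemma isUnit_two_of_odd {n : ℕ} [NeZero n] (hodd : Odd n) : IsUnit (2 : ZMod n) := by
  have : ((2 : ℕ) : ZMod n) = (2 : ZMod n) := by norm_num
  rw [← this]
  rw [ZMod.isUnit_iff_coprime]
  exact Nat.coprime_two_left.mpr hodd

lemma Sn_eq_zero {n : ℕ} [NeZero n] (hodd : Odd n) : Sn n = 0 := by
  have h := Sn_add_self n
  have h2 : (2 : ZMod n) * Sn n = 0 := by linear_combination h
  exact ((isUnit_two_of_odd hodd).mul_right_eq_zero).mp h2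

lemma two_ne_zero_odd {n : ℕ} [NeZero n] (h2 : 2 ≤ n) (hodd : Odd n) :
    (2 : ZMod n) ≠ 0 := by
  haveI : Fact (1 < n) := ⟨h2⟩
  exact (isUnit_two_of_odd hodd).ne_zero

lemma four_ne_zero_odd {n : ℕ} [NeZero n] (h2 : 2 ≤ n) (hodd : Odd n) :
    (4 : ZMod n) ≠ 0 := by
  haveI : Fact (1 < n) := ⟨h2⟩
  have h4 : (4 : ZMod n) = 2 * 2 := by norm_num
  rw [h4]
  exact ((isUnit_two_of_odd hodd).mul (isUnit_two_of_odd hodd)).ne_zero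

lemma Sn_cast (n : ℕ) [NeZero n] :
    Sn n = ((∑ i ∈ Finset.range n, i : ℕ) : ZMod n) := by
  rw [Nat.cast_sum, Sn]
  refine Finset.sum_nbij' (i := fun t : ZMod n => t.val)
    (j := fun i : ℕ => (i : ZMod n)) ?_ ?_ ?_ ?_ ?_
  · intro t _
    exact Finset.mem_range.mpr (ZMod.val_lt t)
  · intro i _
    exact Finset.mem_univ _
  · intro t _
    exact ZMod.natCast_rightInverse t
  · intro i hi
    exact ZMod.val_cast_of_lt (Finset.mem_range.mp hi)
  · intro t _
    exact (ZMod.natCast_rightInverse t).symm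

lemma Sn_ne_zero {n : ℕ} [NeZero n] (h2 : 2 ≤ n) (heven : Even n) : Sn n ≠ 0 := by
  obtain ⟨m, hm⟩ := heven
  have hm1 : 1 ≤ m := by omega
  have hsum : ∑ i ∈ Finset.range n, i = m * (n - 1) := by
    have h := Finset.sum_range_id_mul_two n
    have h' : n * (n - 1) = (m * (n - 1)) * 2 := by
      rw [hm]; ring
    omega
  intro hzero
  rw [Sn_cast, hsum, Nat.cast_mul, Frame.natCast_pred (n := n)] at hzero
  have hmz : ((m : ℕ) : ZMod n) = 0 := by linear_combination -hzero
  have hdvd : n ∣ m := (ZMod.natCast_eq_zero_iff m n).mp hmz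
  have := Nat.le_of_dvd (by omega) hdvd
  omega

end Parity

section Existence

variable {P L : Type*} [Membership P L] [Fintype P] [Fintype L] [ProjectivePlane P L]

lemma card_pencil {n : ℕ} (hord : order P L = n) (p : P) (Linf : L) (hmem : p ∈ Linf) :
    Fintype.card {l : L // p ∈ l ∧ l ≠ Linf} = n := by
  rw [Fintype.card_subtype]
  have hcount : (univ.filter fun l : L => p ∈ l).card = n + 1 := by
    have h := lineCount_eq L p
    rw [hord] at h
    rw [lineCount, Nat.card_eq_fintype_card, Fintype.card_subtype] at h
    exact h
  have heq : (univ.filter fun l : L => p ∈ l ∧ l ≠ Linf)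
      = (univ.filter fun l : L => p ∈ l).erase Linf := by
    ext m
    simp only [Finset.mem_filter, Finset.mem_erase, Finset.mem_univ, true_and]
    tauto
  rw [heq, Finset.card_erase_of_mem (by simp [hmem]), hcount]
  omega

lemma card_linf_pts {n : ℕ} (hord : order P L = n) (q : P) (Linf : L) (hmem : q ∈ Linf) :
    Fintype.card {r : P // r ∈ Linf ∧ r ≠ q} = n := by
  rw [Fintype.card_subtype]
  have hcount : (univ.filter fun r : P => r ∈ Linf).card = n + 1 := by
    have h := pointCount_eq P Linf
    rw [hord] at h
    rw [pointCount, Nat.card_eq_fintype_card, Fintype.card_subtype] at h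
    exact h
  have heq : (univ.filter fun r : P => r ∈ Linf ∧ r ≠ q)
      = (univ.filter fun r : P => r ∈ Linf).erase q := by
    ext m
    simp only [Finset.mem_filter, Finset.mem_erase, Finset.mem_univ, true_and]
    tauto
  rw [heq, Finset.card_erase_of_mem (by simp [hmem]), hcount]
  omega

lemma frame_exists {n : ℕ} (hord : order P L = n) (h2 : 2 ≤ n) :
    Nonempty (Frame P L n) := by
  haveI : NeZero n := ⟨by omega⟩
  obtain ⟨q1, q2, q3, l1, l2, l3, -, -, -, -, -, -, -, -⟩ := @exists_config P L _ _
  have h3 : 2 < pointCount P l1 := two_lt_pointCount P l1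
  rw [pointCount, Nat.card_eq_fintype_card] at h3
  obtain ⟨⟨p1, hp1⟩, ⟨p2, hp2⟩, hne⟩ :=
    Fintype.exists_pair_of_one_lt_card (α := {x : P // x ∈ l1}) (by omega)
  obtain ⟨o, ho⟩ := Nondegenerate.exists_point (P := P) l1
  have hne' : p1 ≠ p2 := fun h => hne (Subtype.ext h)
  have hc1 : Fintype.card {l : L // p1 ∈ l ∧ l ≠ l1} = n := card_pencil hord p1 l1 hp1
  have hc2 : Fintype.card {l : L // p2 ∈ l ∧ l ≠ l1} = n := card_pencil hord p2 l1 hp2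
  have hcA : Fintype.card {r : P // r ∈ l1 ∧ r ≠ p2} = n := card_linf_pts hord p2 l1 hp2
  have hzn : Fintype.card (ZMod n) = n := ZMod.card n
  exact ⟨⟨l1, p1, p2, o, hp1, hp2, hne', ho,
    Fintype.equivOfCardEq (hc1.trans hzn.symm),
    Fintype.equivOfCardEq (hc2.trans hzn.symm),
    Fintype.equivOfCardEq (hcA.trans hzn.symm), hord, h2⟩⟩

end Existence

theorem main {P L : Type*} [Membership P L] [Fintype P] [Fintype L]
    [ProjectivePlane P L] {n : ℕ} (hn : ProjectivePlane.order P L = n) (h2 : 2 ≤ n) :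
    ∃ v : P → (Fin 3 → ZMod n), Function.Injective v ∧ LineInvariant P L v := by
  haveI : NeZero n := ⟨by omega⟩
  obtain ⟨F⟩ := frame_exists hn h2
  by_cases hodd : Odd n
  · have hS : Sn n = 0 := Sn_eq_zero hodd
    have h2z : (2 : ZMod n) ≠ 0 := two_ne_zero_odd h2 hodd
    have h4z : (4 : ZMod n) ≠ 0 := four_ne_zero_odd h2 hodd
    set d : ZMod n := F.a (F.dir F.yy) - F.alf with hd
    set cs : ZMod n := if d = 1 then 2 else 1 with hcs_def
    have h1z : (1 : ZMod n) ≠ 0 := F.one_ne_zero'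
    have hcs : cs ≠ 0 := by
      rw [hcs_def]
      split_ifs
      · exact h2z
      · exact h1z
    have hcsy : F.a (F.dir F.yy) ≠ F.alf + cs := by
      intro h
      have hdc : d = cs := by rw [hd, h]; ring
      rw [hcs_def] at hdc
      split_ifs at hdc with h1
      · rw [h1] at hdc
        exact h1z (by linear_combination -hdc)
      · exact h1 hdc
    exact ⟨F.vv 1 1 1 2 2 1 cs, F.inj_odd hS h2z h4z cs hcs hcsy,
      F.lineInvariant_vv 1 1 1 2 2 1 cs⟩
  · have heven : Even n := Nat.not_odd_iff_even.mp hodd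
    exact ⟨F.vv 0 0 0 0 (Sn n) (Sn n) (Sn n), F.inj_even (Sn_ne_zero h2 heven),
      F.lineInvariant_vv 0 0 0 0 (Sn n) (Sn n) (Sn n)⟩

end MagicPlane

/-- Every finite projective plane of order `n ≥ 2` is magic over `(ℤ/nℤ)³`. -/
theorem stmt_13 {P L : Type*} [Membership P L] [Fintype P] [Fintype L]
    [ProjectivePlane P L] {n : ℕ} (hn : ProjectivePlane.order P L = n) (h2 : 2 ≤ n) :
    ∃ v : P → (Fin 3 → ZMod n), Function.Injective v ∧ LineInvariant P L v :=
  MagicPlane.main hn h2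
end

section
/- Let Π = (P, 𝓛) be a finite projective plane of order n with n prime, and suppose Π is magic over some abelian group G, i.e., there exists an injective line-invariant function v : P → G. Then (ℤ/nℤ)³ is (isomorphic to) a subgroup of G; i.e., there exists an injective group homomorphism (ℤ/nℤ)³ → G. -/
open Configuration

private lemma aux_embed {n : ℕ} (hp : n.Prime) {V : Type*} [AddCommGroup V]
    [Module (ZMod n) V] {P : Type*} [Fintype P] (w : P → V)
    (hw : Function.Injective w) (hcard : n ^ 2 + n + 1 ≤ Fintype.card P) :
    ∃ f : (Fin 3 → ZMod n) →ₗ[ZMod n] V, Function.Injective f := by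
  haveI := Fact.mk hp
  haveI : NeZero n := ⟨hp.ne_zero⟩
  set A : Submodule (ZMod n) V := Submodule.span (ZMod n) (Set.range w) with hAdef
  haveI : Module.Finite (ZMod n) ↥A :=
    Module.Finite.span_of_finite (ZMod n) (Set.finite_range w)
  haveI : Finite ↥A := Module.finite_of_finite (ZMod n)
  haveI : Fintype ↥A := Fintype.ofFinite ↥A
  have hcardA : Fintype.card ↥A = n ^ Module.finrank (ZMod n) ↥A := by
    have := Module.card_eq_pow_finrank (K := ZMod n) (V := ↥A)
    rwa [ZMod.card] at this
  have hPA : Fintype.card P ≤ Fintype.card ↥A := by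
    refine Fintype.card_le_of_injective
      (fun x => ⟨w x, Submodule.subset_span ⟨x, rfl⟩⟩) ?_
    intro a b hab
    exact hw (congrArg Subtype.val hab)
  have hrank : 3 ≤ Module.finrank (ZMod n) ↥A := by
    by_contra hcon
    push_neg at hcon
    have h2 : Module.finrank (ZMod n) ↥A ≤ 2 := by omega
    have hle : Fintype.card ↥A ≤ n ^ 2 := by
      rw [hcardA]
      exact Nat.pow_le_pow_right hp.pos h2
    have hfin : n ^ 2 + n + 1 ≤ n ^ 2 := hcard.trans (hPA.trans hle)
    generalize n ^ 2 = m at hfin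
    omega
  obtain ⟨f, hfli⟩ := exists_linearIndependent_of_le_finrank (R := ZMod n) (M := ↥A) hrank
  set g : (Fin 3 → ZMod n) →ₗ[ZMod n] ↥A :=
    Fintype.linearCombination (ZMod n) f with hgdef
  have hginj : Function.Injective g := by
    refine (injective_iff_map_eq_zero g).mpr fun c hc => ?_
    funext i
    refine Fintype.linearIndependent_iff.mp hfli c ?_ i
    rwa [hgdef, Fintype.linearCombination_apply] at hc
  exact ⟨A.subtype.comp g, Subtype.val_injective.comp hginj⟩

/-- If a projective plane of prime order `n` is magic over an abelian group `G`, then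
`(ℤ/nℤ)³` embeds into `G` as a subgroup. -/
theorem stmt_14 {P L G : Type*} [Membership P L] [Fintype P] [Fintype L]
    [ProjectivePlane P L] [AddCommGroup G]
    {n : ℕ} (hn : ProjectivePlane.order P L = n) (hp : n.Prime)
    (h : ∃ v : P → G, Function.Injective v ∧ LineInvariant P L v) :
    ∃ f : (Fin 3 → ZMod n) →+ G, Function.Injective f := by
  classical
  haveI := Fact.mk hp
  haveI : NeZero n := ⟨hp.ne_zero⟩
  obtain ⟨v, hv, hinv⟩ := h
  obtain ⟨p₁, p₂, p₃, l₁, l₂, l₃, -, -, -, -, -, -, -, -⟩ :=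
    @ProjectivePlane.exists_config P L _ _
  -- lineSum as a Finset sum
  have hls : ∀ l : L, lineSum v l = ∑ y ∈ Finset.univ.filter (· ∈ l), v y := by
    intro l
    rw [lineSum, ← finsum_mem_coe_finset]
    congr 1
    ext y; simp
  set s : G := lineSum v l₁ with hs
  set T : G := ∑ y : P, v y with hT
  -- key identity
  have key : ∀ x : P, (n + 1) • s = (n + 1) • v x + (T - v x) := by
    intro x
    set Lx : Finset L := Finset.univ.filter (fun l : L => x ∈ l) with hLxdef
    have hLx : Lx.card = n + 1 := by
      have h1 := ProjectivePlane.lineCount_eq L x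
      rw [hn] at h1
      rw [lineCount, Nat.card_eq_fintype_card, Fintype.card_subtype] at h1
      exact h1
    have hcard : ∀ y : P, y ≠ x → (Lx.filter (fun l => y ∈ l)).card = 1 := by
      intro y hyx
      rw [Finset.card_eq_one]
      refine ⟨HasLines.mkLine hyx.symm, ?_⟩
      ext l
      simp only [Finset.mem_filter, Finset.mem_singleton, hLxdef, Finset.mem_univ, true_and]
      constructor
      · rintro ⟨hxl, hyl⟩
        exact (Nondegenerate.eq_or_eq hxl hyl (HasLines.mkLine_ax hyx.symm).1
          (HasLines.mkLine_ax hyx.symm).2).resolve_left hyx.symm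
      · rintro rfl
        exact ⟨(HasLines.mkLine_ax hyx.symm).1, (HasLines.mkLine_ax hyx.symm).2⟩
    have hdc : ∑ l ∈ Lx, ∑ y ∈ Finset.univ.filter (· ∈ l), v y
        = ∑ y : P, (Lx.filter (fun l => y ∈ l)).card • v y := by
      calc ∑ l ∈ Lx, ∑ y ∈ Finset.univ.filter (· ∈ l), v y
          = ∑ l ∈ Lx, ∑ y : P, if y ∈ l then v y else 0 := by
            refine Finset.sum_congr rfl fun l _ => ?_
            rw [Finset.sum_filter]
        _ = ∑ y : P, ∑ l ∈ Lx, if y ∈ l then v y else 0 := Finset.sum_comm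
        _ = ∑ y : P, (Lx.filter (fun l => y ∈ l)).card • v y := by
            refine Finset.sum_congr rfl fun y _ => ?_
            rw [← Finset.sum_filter, Finset.sum_const]
    have hrhs : ∑ y : P, (Lx.filter (fun l => y ∈ l)).card • v y
        = (n + 1) • v x + (T - v x) := by
      rw [← Finset.add_sum_erase _ _ (Finset.mem_univ x)]
      have hx : (Lx.filter (fun l => x ∈ l)).card = n + 1 := by
        rw [Finset.filter_true_of_mem, hLx]
        intro l hl
        simpa [hLxdef] using hl
      rw [hx]
      congr 1
      rw [← Finset.sum_erase_eq_sub (Finset.mem_univ x)]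
      refine Finset.sum_congr rfl fun y hy => ?_
      rw [hcard y (Finset.mem_erase.mp hy).1, one_smul]
    have hlhs : ∑ l ∈ Lx, ∑ y ∈ Finset.univ.filter (· ∈ l), v y = (n + 1) • s := by
      have : ∀ l ∈ Lx, ∑ y ∈ Finset.univ.filter (· ∈ l), v y = s := fun l _ => by
        rw [← hls l, hs]; exact hinv l l₁
      rw [Finset.sum_congr rfl this, Finset.sum_const, hLx]
    rw [← hlhs, hdc, hrhs]
  -- n • v x is constant
  have hconst : ∀ x y : P, n • v x = n • v y := by
    intro x y
    have hx := key x
    have hy := key y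
    rw [hx] at hy
    have : (n + 1) • v x - v x = (n + 1) • v y - v y := by
      have := hy
      abel_nf at this ⊢
      linear_combination (norm := abel) this
    simpa [succ_nsmul, add_sub_cancel_right] using this
  -- the n-torsion subgroup
  set H : AddSubgroup G :=
    { carrier := {g | n • g = 0}
      zero_mem' := smul_zero n
      add_mem' := fun {a b} ha hb => by
        simp only [Set.mem_setOf_eq, smul_add] at *
        rw [ha, hb, add_zero]
      neg_mem' := fun {a} ha => by
        simp only [Set.mem_setOf_eq, smul_neg] at *
        rw [ha, neg_zero] } with hHdef
  have hmem : ∀ x : P, v x - v p₁ ∈ H := fun x => by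
    show n • (v x - v p₁) = 0
    rw [smul_sub, hconst x p₁, sub_self]
  set w : P → H := fun x => ⟨v x - v p₁, hmem x⟩ with hwdef
  have hwinj : Function.Injective w := by
    intro a b hab
    apply hv
    have := congrArg (Subtype.val) hab
    simpa [hwdef, sub_left_injective.eq_iff] using this
  letI : Module (ZMod n) H := AddCommGroup.zmodModule (n := n) (fun x => by
    ext
    show n • (x : G) = 0
    exact x.2)
  have hcard : n ^ 2 + n + 1 ≤ Fintype.card P := by
    rw [ProjectivePlane.card_points P L, hn]
  obtain ⟨g, hginj⟩ := aux_embed hp w hwinj hcard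
  refine ⟨H.subtype.comp g.toAddMonoidHom, ?_⟩
  exact Subtype.val_injective.comp hginj
end

section
/- Let Π = (P, 𝓛) be a finite projective plane of order n and let A be its incidence matrix over ℝ, with rows indexed by lines and columns by points, where A_{L,x} = 1 if x ∈ L and A_{L,x} = 0 otherwise. Then det(A·Aᵀ) = (n+1)² · n^{n²+n}. -/
open Configuration Matrix

open scoped Classical in
/-- The incidence matrix of a plane, with rows indexed by lines and columns by points:
the entry at `(l, x)` is `1` if `x ∈ l` and `0` otherwise. -/
noncomputable def incidenceMatrix (P L : Type*) [Membership P L] : Matrix L P ℝ :=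
  Matrix.of fun l x => if x ∈ l then 1 else 0

/-- For the incidence matrix `A` of a projective plane of order `n`,
`det (A * Aᵀ) = (n + 1)² * n^(n² + n)`. -/
theorem stmt_15 {P L : Type*} [Membership P L] [Fintype P] [Fintype L] [DecidableEq L]
    [ProjectivePlane P L] {n : ℕ} (hn : ProjectivePlane.order P L = n) :
    (incidenceMatrix P L * (incidenceMatrix P L)ᵀ).det =
      ((n : ℝ) + 1) ^ 2 * (n : ℝ) ^ (n ^ 2 + n) := by
  classical
  have hord := ProjectivePlane.one_lt_order P L
  rw [hn] at hord
  have hn0 : (n : ℝ) ≠ 0 := by positivity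
  have hm : Fintype.card L = n ^ 2 + n + 1 := by
    rw [ProjectivePlane.card_lines P L, hn]
  have key : incidenceMatrix P L * (incidenceMatrix P L)ᵀ
      = (n : ℝ) • (1 + Matrix.replicateCol Unit (fun _ => (n : ℝ)⁻¹) *
          Matrix.replicateRow Unit (fun _ => (1 : ℝ))) := by
    ext l l'
    have : ∀ x : P, incidenceMatrix P L l x * (incidenceMatrix P L)ᵀ x l'
        = if x ∈ l ∧ x ∈ l' then (1 : ℝ) else 0 := by
      intro x
      simp only [incidenceMatrix, Matrix.transpose_apply, Matrix.of_apply]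
      by_cases h1 : x ∈ l <;> by_cases h2 : x ∈ l' <;> simp [h1, h2]
    rw [Matrix.mul_apply]
    simp only [this, Finset.sum_ite_eq, Finset.sum_boole]
    by_cases h : l = l'
    · subst h
      have : (Finset.univ.filter fun x : P => x ∈ l ∧ x ∈ l).card
          = Configuration.pointCount P l := by
        simp only [and_self, Configuration.pointCount, Nat.card_eq_fintype_card,
          Fintype.card_subtype]
      simp only [Matrix.smul_apply, Matrix.add_apply, Matrix.one_apply_eq,
        Matrix.mul_apply, Matrix.replicateCol_apply, Matrix.replicateRow_apply, Finset.sum_const,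
        Finset.card_univ, Fintype.card_unit, one_smul, smul_eq_mul]
      rw [this, Configuration.ProjectivePlane.pointCount_eq P l, hn]
      push_cast
      field_simp
    · have hone : (Finset.univ.filter fun x : P => x ∈ l ∧ x ∈ l').card = 1 := by
        rw [Finset.card_eq_one]
        refine ⟨Configuration.HasPoints.mkPoint (P := P) h, ?_⟩
        ext x
        simp only [Finset.mem_filter, Finset.mem_univ, true_and, Finset.mem_singleton]
        constructor
        · rintro ⟨hx1, hx2⟩
          have := Configuration.HasPoints.mkPoint_ax (P := P) (l₁ := l) (l₂ := l') h
          exact (Configuration.Nondegenerate.eq_or_eq hx1 this.1 hx2 this.2).resolve_right h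
        · rintro rfl
          exact Configuration.HasPoints.mkPoint_ax (P := P) h
      simp only [Matrix.smul_apply, Matrix.add_apply, Matrix.one_apply_ne h,
        Matrix.mul_apply, Matrix.replicateCol_apply, Matrix.replicateRow_apply, Finset.sum_const,
        Finset.card_univ, Fintype.card_unit, one_smul, smul_eq_mul]
      rw [hone]
      push_cast
      field_simp
      ring
  rw [key, Matrix.det_smul, Matrix.det_one_add_replicateCol_mul_replicateRow]
  rw [hm]
  simp only [dotProduct, Pi.one_apply, one_mul, Finset.sum_const,
    Finset.card_univ, hm, nsmul_eq_mul]
  push_cast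
  field_simp
  ring
end

section
/- Let Π = (P, 𝓛) be a finite projective plane of order n and let A be its incidence matrix over ℝ (rows indexed by lines, columns by points, with A_{L,x} = 1 if x ∈ L and 0 otherwise). Then A is invertible. -/
open Configuration

open Matrix Configuration.ProjectivePlane

section Aux

variable {P L : Type*} [Membership P L] [Fintype P] [Fintype L]
    [DecidableEq P] [DecidableEq L] [ProjectivePlane P L]

lemma incidence_mul_transpose :
    incidenceMatrix P L * (incidenceMatrix P L)ᵀ =
      (ProjectivePlane.order P L : ℝ) • (1 : Matrix L L ℝ) +
        Matrix.of (fun _ _ : L => (1 : ℝ)) := by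
  classical
  ext l l'
  have key : (∑ x, (if x ∈ l then (1:ℝ) else 0) * (if x ∈ l' then 1 else 0))
      = ((Finset.univ.filter (fun x : P => x ∈ l ∧ x ∈ l')).card : ℝ) := by
    rw [Finset.card_filter]
    push_cast
    refine Finset.sum_congr rfl fun x _ => ?_
    by_cases h1 : x ∈ l <;> by_cases h2 : x ∈ l' <;> simp [h1, h2]
  simp only [Matrix.mul_apply, Matrix.transpose_apply, incidenceMatrix, Matrix.of_apply,
    Matrix.add_apply, Matrix.smul_apply, Matrix.one_apply, smul_eq_mul]
  rw [key]
  by_cases h : l = l'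
  · subst h
    have hc : (Finset.univ.filter (fun x : P => x ∈ l ∧ x ∈ l)).card = pointCount P l := by
      rw [pointCount, Nat.card_eq_fintype_card, Fintype.card_subtype]
      congr 1
      ext x
      simp
    rw [hc, pointCount_eq P l]
    simp
  · obtain ⟨p, hp, hu⟩ := HasPoints.existsUnique_point P L l l' h
    have hc : (Finset.univ.filter (fun x : P => x ∈ l ∧ x ∈ l')).card = 1 := by
      rw [Finset.card_eq_one]
      refine ⟨p, ?_⟩
      ext x
      simp only [Finset.mem_filter, Finset.mem_univ, true_and, Finset.mem_singleton]
      exact ⟨fun hx => hu x hx, fun hx => hx ▸ hp⟩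
    rw [hc]
    simp [h]

end Aux

/-- The incidence matrix of a finite projective plane is invertible (over `ℝ`). -/
theorem stmt_16 {P L : Type*} [Membership P L] [Fintype P] [Fintype L]
    [DecidableEq P] [DecidableEq L] [ProjectivePlane P L] :
    ∃ B : Matrix P L ℝ,
      incidenceMatrix P L * B = 1 ∧ B * incidenceMatrix P L = 1 := by
  classical
  set n : ℝ := (ProjectivePlane.order P L : ℝ) with hn
  set N : ℝ := (Fintype.card L : ℝ) with hN
  have hnpos : 0 < n := by
    have := Configuration.ProjectivePlane.one_lt_order P L
    rw [hn]
    exact_mod_cast Nat.lt_of_lt_of_le Nat.zero_lt_one this.le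
  have hNnonneg : 0 ≤ N := by rw [hN]; positivity
  have hnN : 0 < n + N := by linarith
  set J : Matrix L L ℝ := Matrix.of (fun _ _ : L => (1 : ℝ)) with hJ
  have hJJ : J * J = N • J := by
    ext l l'
    simp [hJ, Matrix.mul_apply, hN, mul_comm]
  set C : Matrix L L ℝ := (1 / n) • (1 : Matrix L L ℝ) - (1 / (n * (n + N))) • J with hC
  have hinv : (n • (1 : Matrix L L ℝ) + J) * C = 1 := by
    have expand : (n • (1 : Matrix L L ℝ) + J) * C
        = (n * (1 / n)) • (1 : Matrix L L ℝ)
          + (1 / n - n * (1 / (n * (n + N))) - 1 / (n * (n + N)) * N) • J := by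
      simp only [hC, mul_sub, add_mul, Matrix.smul_mul, Matrix.mul_smul, one_mul, mul_one,
        hJJ, smul_smul]
      module
    rw [expand]
    have h1 : n * (1 / n) = 1 := by field_simp
    have h2 : 1 / n - n * (1 / (n * (n + N))) - 1 / (n * (n + N)) * N = 0 := by
      field_simp
      ring
    rw [h1, h2, one_smul, zero_smul, add_zero]
  have hright : incidenceMatrix P L * ((incidenceMatrix P L)ᵀ * C) = 1 := by
    rw [← Matrix.mul_assoc, incidence_mul_transpose, hinv]
  have e : L ≃ P :=
    (Fintype.equivOfCardEq (Configuration.ProjectivePlane.card_points_eq_card_lines P L)).symm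
  exact ⟨(incidenceMatrix P L)ᵀ * C, hright, (Matrix.mul_eq_one_comm_of_equiv e).mp hright⟩
end

section
/- Let Π = (P, 𝓛) be a finite projective plane and let k ∈ ℕ. Then every line-invariant function v : P → ℤ^k is constant. -/
open Configuration

/-- Every line-invariant function from a finite projective plane to `ℤ^k` is constant. -/
theorem stmt_18 {P L : Type*} [Membership P L] [Fintype P] [Fintype L]
    [ProjectivePlane P L] (k : ℕ) (v : P → (Fin k → ℤ)) (hv : LineInvariant P L v) :
    ∀ a b : P, v a = v b := by
  classical
  -- lineSum as a finset sum
  have hls : ∀ l : L, lineSum v l = ∑ x ∈ Finset.univ.filter (· ∈ l), v x := by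
    intro l
    rw [lineSum, ← finsum_mem_coe_finset]
    congr 1
    ext x; simp
  obtain ⟨p₀, l₀, h₀⟩ : ∃ (p : P) (l : L), p ∈ l := by
    obtain ⟨p₁, p₂, p₃, l₁, l₂, l₃, -, -, -, h₂₂, -, -, -, -⟩ :=
      @Configuration.ProjectivePlane.exists_config P L _ _
    exact ⟨p₂, l₂, h₂₂⟩
  set c : Fin k → ℤ := lineSum v l₀ with hc
  set S : Fin k → ℤ := ∑ x : P, v x with hS
  set N : ℕ := ProjectivePlane.order P L + 1 with hN
  -- key identity
  have key : ∀ p : P, N • c = S - v p + N • v p := by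
    intro p
    have hcard : (Finset.univ.filter (fun l : L => p ∈ l)).card = N := by
      rw [hN, ← ProjectivePlane.lineCount_eq L p, lineCount, Nat.card_eq_fintype_card, Fintype.card_subtype]
    have lhs : ∑ l ∈ Finset.univ.filter (fun l : L => p ∈ l), lineSum v l = N • c := by
      rw [Finset.sum_congr rfl (fun l _ => hv l l₀), Finset.sum_const, hcard]
    rw [← lhs]
    have swap : ∑ l ∈ Finset.univ.filter (fun l : L => p ∈ l), lineSum v l
        = ∑ x : P, (Finset.univ.filter (fun l : L => p ∈ l ∧ x ∈ l)).card • v x := by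
      calc ∑ l ∈ Finset.univ.filter (fun l : L => p ∈ l), lineSum v l
          = ∑ l ∈ Finset.univ.filter (fun l : L => p ∈ l), ∑ x : P, if x ∈ l then v x else 0 := by
            simp_rw [hls, Finset.sum_filter]
        _ = ∑ x : P, ∑ l ∈ Finset.univ.filter (fun l : L => p ∈ l), if x ∈ l then v x else 0 :=
            Finset.sum_comm
        _ = ∑ x : P, (Finset.univ.filter (fun l : L => p ∈ l ∧ x ∈ l)).card • v x := by
            simp_rw [← Finset.sum_filter, Finset.sum_const, Finset.filter_filter]
    rw [swap]
    have hcard2 : ∀ x : P, x ≠ p → (Finset.univ.filter (fun l : L => p ∈ l ∧ x ∈ l)).card = 1 := by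
      intro x hx
      rw [Finset.card_eq_one]
      refine ⟨Configuration.HasLines.mkLine hx.symm, ?_⟩
      ext l
      simp only [Finset.mem_filter, Finset.mem_univ, true_and, Finset.mem_singleton]
      constructor
      · rintro ⟨hp, hx'⟩
        have := Configuration.Nondegenerate.eq_or_eq (P := P) (L := L) hx'
          hp (Configuration.HasLines.mkLine_ax hx.symm).2 (Configuration.HasLines.mkLine_ax hx.symm).1
        tauto
      · rintro rfl
        exact ⟨(Configuration.HasLines.mkLine_ax hx.symm).1, (Configuration.HasLines.mkLine_ax hx.symm).2⟩
    have hcardp : (Finset.univ.filter (fun l : L => p ∈ l ∧ p ∈ l)).card = N := by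
      simpa using hcard
    rw [← Finset.sum_erase_add _ _ (Finset.mem_univ p), hcardp]
    have : ∑ x ∈ Finset.univ.erase p, (Finset.univ.filter (fun l : L => p ∈ l ∧ x ∈ l)).card • v x
        = ∑ x ∈ Finset.univ.erase p, v x := by
      apply Finset.sum_congr rfl
      intro x hx
      rw [hcard2 x (Finset.mem_erase.mp hx).1, one_smul]
    rw [this, hS, ← Finset.sum_erase_add _ _ (Finset.mem_univ p)]
    abel
  intro a b
  have h2 : 1 < ProjectivePlane.order P L := ProjectivePlane.one_lt_order P L
  have heq := (key a).symm.trans (key b)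
  funext i
  have hi := congrFun heq i
  simp only [Pi.add_apply, Pi.sub_apply, Pi.smul_apply] at hi
  simp only [nsmul_eq_mul] at hi
  have hN1 : ((N : ℤ) - 1) ≠ 0 := by
    have : (2:ℤ) ≤ N := by exact_mod_cast Nat.succ_le_succ h2.le
    omega
  have h3 : ((N:ℤ) - 1) * (v a i - v b i) = 0 := by linear_combination hi
  rcases mul_eq_zero.mp h3 with h | h
  · exact absurd h hN1
  · exact sub_eq_zero.mp h
end
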